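/- arXiv:2210.07552 — 3 statements merged into one kernel-verified Lean document; each statement's English description precedes it below -/
import Mathlib

section
/- Let w̃^α_n ∈ ℂ[[t^*_*, ε]] (1 ≤ α ≤ N, n ≥ 0) be a family of formal power series in normal form, i.e., w̃^α_n = t^α_n + δ_{n,1}A^α + R^α_n + O(ε²) with R^α_n ∈ ℂ[[t^*_*]]^{(n+1)}. If P, Q ∈ 𝒜̂_w are differential polynomials such that the substitutions satisfy P|_{w^α_a = w̃^α_a} = Q|_{w^α_a = w̃^α_a} in ℂ[[t^*_*, ε]], then P = Q. -/
open scoped Classical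

noncomputable section

/-- Index type for the formal variables: `Sum.inl (α, a)` represents `t^α_a` (equivalently,
`w^α_a` for differential polynomials), and `Sum.inr ()` represents `ε`. -/
abbrev Var (N : ℕ) : Type := (Fin N × ℕ) ⊕ Unit

/-- The ring `ℂ[[t^*_*, ε]]` (equivalently, the ambient ring containing `𝒜̂_w`). -/
abbrev FPS (N : ℕ) : Type := MvPowerSeries (Var N) ℂ

/-- The variable `ε`. -/
abbrev epsV (N : ℕ) : Var N := Sum.inr ()

/-- Coefficient of the monomial `m` in `F`. -/
def cf {N : ℕ} (m : Var N →₀ ℕ) (F : FPS N) : ℂ := MvPowerSeries.coeff m F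

/-- Build a power series from its coefficient function. -/
def ofCf {N : ℕ} (f : (Var N →₀ ℕ) → ℂ) : FPS N := f

/-- Total subscript weight of a monomial: for `t^{α₁}_{d₁} ⋯ t^{α_j}_{d_j}` this is
`d₁ + ⋯ + d_j` (counted with multiplicity). -/
def tweight {N : ℕ} (m : Var N →₀ ℕ) : ℕ :=
  m.sum fun v k =>
    match v with
    | Sum.inl (_, a) => a * k
    | Sum.inr _ => 0

/-- Membership in the ideal `ℂ[[t^*_*]]^{(d)} ⊆ ℂ[[t^*_*, ε]]`. -/
def InIdeal {N : ℕ} (d : ℕ) (R : FPS N) : Prop :=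
  ∀ m : Var N →₀ ℕ, cf m R ≠ 0 → m (epsV N) = 0 ∧ d ≤ tweight m

/-- The family `w̃^α_n` is in normal form:
`w̃^α_n = t^α_n + δ_{n,1} A^α + R^α_n + O(ε²)` with `R^α_n ∈ ℂ[[t^*_*]]^{(n+1)}`. -/
def NormalForm {N : ℕ} (A : Fin N → ℂ) (w : Fin N → ℕ → FPS N) : Prop :=
  ∀ (α : Fin N) (n : ℕ), ∃ R S : FPS N, InIdeal (n + 1) R ∧
    w α n = MvPowerSeries.X (Sum.inl (α, n))
      + (MvPowerSeries.C : ℂ →+* FPS N) (if n = 1 then A α else 0)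
      + R + MvPowerSeries.X (epsV N) ^ 2 * S

/-- The "shape" of a monomial in the variables `w^α_d` with `d ≥ 1` (the positive variables). -/
def posShape {N : ℕ} (m : Var N →₀ ℕ) : (Fin N × ℕ) → ℕ :=
  fun p => if 1 ≤ p.2 then m (Sum.inl p) else 0

/-- `P` is a differential polynomial from `𝒜̂_w = 𝒜_w[[ε]]`,
`𝒜_w = ℂ[[w^*_0]][w^*_{≥1}]`: for each power `k` of `ε`, the `ε^k`-slice of `P` is a formal
power series in the `w^α_0` whose coefficients are polynomials in the `w^α_d`, `d ≥ 1`; i.e.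
only finitely many monomial shapes in the positive variables occur in it. -/
def IsDiffPoly {N : ℕ} (P : FPS N) : Prop :=
  ∀ k : ℕ,
    {s : (Fin N × ℕ) → ℕ |
      ∃ m : Var N →₀ ℕ, cf m P ≠ 0 ∧ m (epsV N) = k ∧ posShape m = s}.Finite

/-- Evaluation of a monomial `m` on the family `f`. -/
def prodPow {N : ℕ} (f : Var N → FPS N) (m : Var N →₀ ℕ) : FPS N :=
  m.prod fun v k => f v ^ k

/-- Coefficient-wise substitution of the family `f` into `G`. -/
def evalFam {N : ℕ} (f : Var N → FPS N) (G : FPS N) : FPS N :=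
  ofCf fun μ => ∑ᶠ m : Var N →₀ ℕ, cf m G * cf μ (prodPow f m)

/-- The substitution family `w^α_a ↦ w̃^α_a`, `ε ↦ ε`. -/
def substFam {N : ℕ} (w : Fin N → ℕ → FPS N) : Var N → FPS N :=
  fun v =>
    match v with
    | Sum.inl (α, a) => w α a
    | Sum.inr _ => MvPowerSeries.X (epsV N)

namespace St1

variable {N : ℕ}

lemma cf_ofCf (f : (Var N →₀ ℕ) → ℂ) (m : Var N →₀ ℕ) : cf m (ofCf f) = f m := rfl

lemma cf_eval (f : Var N → FPS N) (G : FPS N) (μ : Var N →₀ ℕ) :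
    cf μ (evalFam f G) = ∑ᶠ m : Var N →₀ ℕ, cf m G * cf μ (prodPow f m) := rfl

lemma tweight_zero : tweight (0 : Var N →₀ ℕ) = 0 := Finsupp.sum_zero_index

lemma tweight_add (m₁ m₂ : Var N →₀ ℕ) : tweight (m₁ + m₂) = tweight m₁ + tweight m₂ :=
  Finsupp.sum_add_index' (fun v => by cases v with | inl p => exact (Nat.mul_zero _) | inr u => rfl)
    (fun v k l => by cases v with | inl p => exact (Nat.mul_add _ _ _) | inr u => rfl)

lemma tweight_single (v : Var N) (k : ℕ) :
    tweight (Finsupp.single v k) =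
      (match v with | Sum.inl (_, a) => a * k | Sum.inr _ => 0) :=
  Finsupp.sum_single_index (by cases v with | inl p => exact (Nat.mul_zero _) | inr u => rfl)

/-- degree in the `t`-variables -/
def tdeg (m : Var N →₀ ℕ) : ℕ :=
  m.sum fun v k => match v with | Sum.inl _ => k | Sum.inr _ => 0

lemma tdeg_add (m₁ m₂ : Var N →₀ ℕ) : tdeg (m₁ + m₂) = tdeg m₁ + tdeg m₂ :=
  Finsupp.sum_add_index' (fun v => by cases v <;> rfl) (fun v k l => by cases v <;> rfl)

lemma tdeg_single (v : Var N) (k : ℕ) :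
    tdeg (Finsupp.single v k) = (match v with | Sum.inl _ => k | Sum.inr _ => 0) :=
  Finsupp.sum_single_index (by cases v <;> rfl)

lemma tweight_eq_zero_of_tdeg_eq_zero (m : Var N →₀ ℕ) (h : tdeg m = 0) : tweight m = 0 := by
  unfold tdeg at h
  rw [Finsupp.sum, Finset.sum_eq_zero_iff] at h
  unfold tweight
  rw [Finsupp.sum, Finset.sum_eq_zero]
  intro v hv
  cases v with
  | inl p =>
    exact absurd (h _ hv) (Finsupp.mem_support_iff.mp hv)
  | inr u => rfl

def wsum (ψ : Var N → ℕ) (m : Var N →₀ ℕ) : ℕ := m.sum fun v k => k * ψ v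

lemma wsum_zero (ψ : Var N → ℕ) : wsum ψ (0 : Var N →₀ ℕ) = 0 := Finsupp.sum_zero_index

lemma wsum_add (ψ : Var N → ℕ) (m₁ m₂ : Var N →₀ ℕ) :
    wsum ψ (m₁ + m₂) = wsum ψ m₁ + wsum ψ m₂ :=
  Finsupp.sum_add_index' (fun v => Nat.zero_mul _) (fun v k l => Nat.add_mul _ _ _)

lemma wsum_single (ψ : Var N → ℕ) (v : Var N) (k : ℕ) :
    wsum ψ (Finsupp.single v k) = k * ψ v :=
  Finsupp.sum_single_index (Nat.zero_mul _)

lemma apply_mul_le_wsum (ψ : Var N → ℕ) (m : Var N →₀ ℕ) (v : Var N) :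
    m v * ψ v ≤ wsum ψ m := by
  by_cases h : m v = 0
  · simp [h]
  · unfold wsum Finsupp.sum
    exact Finset.single_le_sum (f := fun x => m x * ψ x) (fun i _ => Nat.zero_le _)
      (Finsupp.mem_support_iff.mpr h)

lemma prodPow_zero (f : Var N → FPS N) : prodPow f 0 = 1 := Finsupp.prod_zero_index

lemma prodPow_add (f : Var N → FPS N) (m₁ m₂ : Var N →₀ ℕ) :
    prodPow f (m₁ + m₂) = prodPow f m₁ * prodPow f m₂ :=
  Finsupp.prod_add_index' (fun a => pow_zero _) (fun a b c => pow_add _ _ _)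

lemma prodPow_single (f : Var N → FPS N) (v : Var N) (n : ℕ) :
    prodPow f (Finsupp.single v n) = f v ^ n :=
  Finsupp.prod_single_index (pow_zero _)

lemma prodPow_ind (f : Var N → FPS N) (Pi : (Var N →₀ ℕ) → FPS N → Prop)
    (h1 : Pi 0 1)
    (hmul : ∀ m₁ m₂ G₁ G₂, Pi m₁ G₁ → Pi m₂ G₂ → Pi (m₁ + m₂) (G₁ * G₂))
    (hvar : ∀ v, Pi (Finsupp.single v 1) (f v)) (m : Var N →₀ ℕ) :
    Pi m (prodPow f m) := by
  induction m using Finsupp.induction with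
  | zero => rw [prodPow_zero]; exact h1
  | single_add v n m hv hn ih =>
    have hpow : ∀ k, Pi (Finsupp.single v k) (f v ^ k) := by
      intro k
      induction k with
      | zero => rw [Finsupp.single_zero, pow_zero]; exact h1
      | succ k ihk =>
        have := hmul _ _ _ _ ihk (hvar v)
        rwa [← Finsupp.single_add, ← pow_succ] at this
    rw [prodPow_add, prodPow_single]
    exact hmul _ _ _ _ (hpow n) ih

lemma coeff_prodPow_wsum_le (φ : (Var N →₀ ℕ) → ℕ) (h0 : φ 0 = 0)
    (hadd : ∀ a b, φ (a + b) = φ a + φ b) (ψ : Var N → ℕ) (f : Var N → FPS N)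
    (hf : ∀ v μ, cf μ (f v) ≠ 0 → ψ v ≤ φ μ) (m μ : Var N →₀ ℕ)
    (hne : cf μ (prodPow f m) ≠ 0) : wsum ψ m ≤ φ μ := by
  refine prodPow_ind f (fun m G => ∀ μ, cf μ G ≠ 0 → wsum ψ m ≤ φ μ) ?_ ?_ ?_ m μ hne
  · intro μ hμ
    have : μ = 0 := by
      by_contra hc
      apply hμ
      simp [cf, MvPowerSeries.coeff_one, hc]
    simp [this, wsum_zero, h0]
  · intro m₁ m₂ G₁ G₂ ih₁ ih₂ μ hμ
    rw [cf, MvPowerSeries.coeff_mul] at hμ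
    obtain ⟨p, hp, hpne⟩ := Finset.exists_ne_zero_of_sum_ne_zero hμ
    rw [Finset.HasAntidiagonal.mem_antidiagonal] at hp
    rw [mul_ne_zero_iff] at hpne
    rw [wsum_add, ← hp, hadd]
    exact Nat.add_le_add (ih₁ _ hpne.1) (ih₂ _ hpne.2)
  · intro v μ hμ
    rw [wsum_single, one_mul]
    exact hf v μ hμ


lemma finstar (P : Set ((Fin N × ℕ) → ℕ)) (hP : P.Finite) (K B : ℕ) :
    {m : Var N →₀ ℕ | posShape m ∈ P ∧ m (epsV N) ≤ K ∧
      ∀ α : Fin N, m (Sum.inl (α, 0)) ≤ B}.Finite := by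
  classical
  set ι : (Var N →₀ ℕ) → (((Fin N × ℕ) → ℕ) × (Fin N → ℕ) × ℕ) :=
    fun m => (posShape m, fun α => m (Sum.inl (α, 0)), m (epsV N)) with hι
  have hinj : Function.Injective ι := by
    intro m m' hmm
    have h1 : posShape m = posShape m' := congrArg Prod.fst hmm
    have h2 : (fun α => m (Sum.inl (α, 0))) = fun α => m' (Sum.inl (α, 0)) :=
      congrArg (fun x => x.2.1) hmm
    have h3 : m (epsV N) = m' (epsV N) := congrArg (fun x => x.2.2) hmm
    ext v
    cases v with
    | inl p =>
      obtain ⟨α, a⟩ := p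
      cases a with
      | zero => exact congrFun h2 α
      | succ a =>
        have := congrFun h1 (α, a + 1)
        simpa [posShape] using this
    | inr u => cases u; exact h3
  have hTfin : (P ×ˢ ({f : Fin N → ℕ | ∀ α, f α ≤ B} ×ˢ Set.Iic K)).Finite := by
    apply hP.prod
    apply Set.Finite.prod ?_ (Set.finite_Iic K)
    have : {f : Fin N → ℕ | ∀ α, f α ≤ B} = Set.pi Set.univ (fun _ : Fin N => Set.Iic B) := by
      ext f; simp [Set.mem_pi, Pi.le_def]
    rw [this]
    exact Set.Finite.pi fun _ => Set.finite_Iic B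
  apply Set.Finite.subset (hTfin.preimage (hinj.injOn))
  intro m hm
  exact ⟨hm.1, hm.2.2, hm.2.1⟩

lemma shapeclose (P : Set ((Fin N × ℕ) → ℕ)) (hP : P.Finite) :
    {s : (Fin N × ℕ) → ℕ | ∃ s' ∈ P, (∀ p, s p ≤ s' p) ∧
      ∀ p : Fin N × ℕ, p.2 ≠ 1 → s p = s' p}.Finite := by
  classical
  have hfin : ∀ s' : (Fin N × ℕ) → ℕ, {s : (Fin N × ℕ) → ℕ | (∀ p, s p ≤ s' p) ∧
      ∀ p : Fin N × ℕ, p.2 ≠ 1 → s p = s' p}.Finite := by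
    intro s'
    apply Set.Finite.of_finite_image (f := fun s => fun α : Fin N => s (α, 1))
    · apply Set.Finite.subset (s := {j : Fin N → ℕ | ∀ α, j α ≤ s' (α, 1)})
      · have : {j : Fin N → ℕ | ∀ α, j α ≤ s' (α,1)} =
            Set.pi Set.univ (fun α : Fin N => Set.Iic (s' (α,1))) := by
          ext f; simp [Set.mem_pi, Pi.le_def]
        rw [this]
        exact Set.Finite.pi fun _ => Set.finite_Iic _
      · rintro j ⟨s, hs, rfl⟩
        intro α
        exact hs.1 (α, 1)
    · intro s hs t ht hst
      ext p
      obtain ⟨α, a⟩ := p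
      by_cases ha : a = 1
      · subst ha; exact congrFun hst α
      · rw [hs.2 (α, a) ha, ht.2 (α, a) ha]
  apply Set.Finite.subset (hP.biUnion (fun s' _ => hfin s'))
  intro s hs
  obtain ⟨s', hs', h1, h2⟩ := hs
  exact Set.mem_biUnion hs' ⟨h1, h2⟩

section Families

variable (A : Fin N → ℂ) (w : Fin N → ℕ → FPS N)

/-- the constants δ_{a,1} A^α -/
def ccA : Var N → ℂ := Sum.elim (fun p => if p.2 = 1 then A p.1 else 0) (fun _ => 0)

/-- the constant-free family `w̃ - δ_{a,1}A` -/
def gg : Var N → FPS N := fun v => substFam w v - (MvPowerSeries.C : ℂ →+* FPS N) (ccA A v)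

/-- the translation family `X + δ_{a,1}A` -/
def tauF : Var N → FPS N := fun v => MvPowerSeries.X v + (MvPowerSeries.C : ℂ →+* FPS N) (ccA A v)

lemma gg_add_C (v : Var N) :
    gg A w v + (MvPowerSeries.C : ℂ →+* FPS N) (ccA A v) = substFam w v := sub_add_cancel _ _

lemma gg_eps (u : Unit) : gg A w (Sum.inr u) = MvPowerSeries.X (epsV N) := by
  have : ccA A (Sum.inr u) = 0 := rfl
  simp [gg, this, substFam]

lemma ccA_inl (α : Fin N) (n : ℕ) : ccA A (Sum.inl (α, n)) = if n = 1 then A α else 0 := rfl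

lemma gg_struct (hw : NormalForm A w) (α : Fin N) (n : ℕ) :
    ∃ R S : FPS N, InIdeal (n + 1) R ∧
      gg A w (Sum.inl (α, n)) = MvPowerSeries.X (Sum.inl (α, n)) + R
        + MvPowerSeries.X (epsV N) ^ 2 * S := by
  obtain ⟨R, S, hR, heq⟩ := hw α n
  refine ⟨R, S, hR, ?_⟩
  have h1 : substFam w (Sum.inl (α, n)) = w α n := rfl
  rw [gg, h1, heq, ccA_inl]
  ring

lemma cf_X (v : Var N) (μ : Var N →₀ ℕ) :
    cf μ (MvPowerSeries.X v : FPS N) = if μ = Finsupp.single v 1 then 1 else 0 :=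
  MvPowerSeries.coeff_X μ v

lemma cf_C (c : ℂ) (μ : Var N →₀ ℕ) :
    cf μ ((MvPowerSeries.C : ℂ →+* FPS N) c) = if μ = 0 then c else 0 :=
  MvPowerSeries.coeff_C μ c

lemma eps_sq (S : FPS N) (μ : Var N →₀ ℕ)
    (h : cf μ (MvPowerSeries.X (epsV N) ^ 2 * S) ≠ 0) : 2 ≤ μ (epsV N) := by
  rw [cf, MvPowerSeries.coeff_mul] at h
  obtain ⟨p, hp, hne⟩ := Finset.exists_ne_zero_of_sum_ne_zero h
  rw [Finset.HasAntidiagonal.mem_antidiagonal] at hp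
  rw [mul_ne_zero_iff] at hne
  have h1 := hne.1
  rw [MvPowerSeries.X_pow_eq, MvPowerSeries.coeff_monomial] at h1
  have hp1 : p.1 = Finsupp.single (epsV N) 2 := by
    by_contra hc; exact h1 (if_neg hc)
  have := congrFun (congrArg (fun (z : Var N →₀ ℕ) => ⇑z) hp) (epsV N)
  simp only [Finsupp.coe_add, Pi.add_apply, hp1, Finsupp.single_eq_same] at this
  omega

def ψe : Var N → ℕ := Sum.elim (fun _ => 0) (fun _ => 1)
def ψz : Var N → ℕ := Sum.elim (fun p => if p.2 = 0 then 1 else 0) (fun _ => 1)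

lemma cf_X_eps (μ : Var N →₀ ℕ) (h : cf μ (MvPowerSeries.X (epsV N) : FPS N) ≠ 0) :
    μ = Finsupp.single (epsV N) 1 := by
  rw [cf_X] at h
  by_contra hc; exact h (if_neg hc)

lemma hfe : ∀ (v : Var N) μ, cf μ (substFam w v) ≠ 0 → ψe v ≤ μ (epsV N) := by
  intro v μ h
  cases v with
  | inl p => exact Nat.zero_le _
  | inr u =>
    have : μ = Finsupp.single (epsV N) 1 := cf_X_eps (μ := μ) (by exact h)
    subst this
    simp [ψe, Finsupp.single_eq_same]

lemma cf4 {a b c d : FPS N} {μ : Var N →₀ ℕ} (h : cf μ (a + b + c + d) ≠ 0) :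
    cf μ a ≠ 0 ∨ cf μ b ≠ 0 ∨ cf μ c ≠ 0 ∨ cf μ d ≠ 0 := by
  by_contra hc
  push_neg at hc
  obtain ⟨h1, h2, h3, h4⟩ := hc
  apply h
  simp only [cf, map_add] at *
  rw [h1, h2, h3, h4]; ring

lemma cf3 {a b c : FPS N} {μ : Var N →₀ ℕ} (h : cf μ (a + b + c) ≠ 0) :
    cf μ a ≠ 0 ∨ cf μ b ≠ 0 ∨ cf μ c ≠ 0 := by
  by_contra hc
  push_neg at hc
  obtain ⟨h1, h2, h3⟩ := hc
  apply h
  simp only [cf, map_add] at *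
  rw [h1, h2, h3]; ring

lemma hfz (hw : NormalForm A w) :
    ∀ (v : Var N) μ, cf μ (substFam w v) ≠ 0 → ψz v ≤ tdeg μ + μ (epsV N) := by
  intro v μ h
  cases v with
  | inl p =>
    obtain ⟨α, a⟩ := p
    cases a with
    | succ a =>
      have : ψz (Sum.inl (α, a + 1)) = 0 := by simp [ψz]
      omega
    | zero =>
      have hψ : ψz (Sum.inl (α, (0:ℕ))) = 1 := by simp [ψz]
      rw [hψ]
      obtain ⟨R, S, hR, heq⟩ := hw α 0
      have h0 : substFam w (Sum.inl (α, 0)) = w α 0 := rfl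
      rw [h0, heq] at h
      rcases cf4 h with h' | h' | h' | h'
      · have : μ = Finsupp.single (Sum.inl (α, (0:ℕ))) 1 := by
          rw [cf_X] at h'
          by_contra hc; exact h' (if_neg hc)
        subst this
        have ht : tdeg (Finsupp.single (Sum.inl (α, (0:ℕ)) : Var N) 1) = 1 := by
          rw [tdeg_single]
        rw [ht]
        omega
      · exfalso
        apply h'
        simp [cf]
      · have h1 := (hR μ h').2
        have h2 : tdeg μ ≠ 0 := by
          intro h0'
          have := tweight_eq_zero_of_tdeg_eq_zero μ h0'
          omega
        omega
      · have := eps_sq S μ h'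
        omega
  | inr u =>
    have : μ = Finsupp.single (epsV N) 1 := cf_X_eps (μ := μ) (by exact h)
    subst this
    have : ψz (Sum.inr u : Var N) = 1 := rfl
    simp [this, Finsupp.single_eq_same]

lemma gg_ne_cases {v : Var N} {μ : Var N →₀ ℕ} (h : cf μ (gg A w v) ≠ 0) :
    cf μ (substFam w v) ≠ 0 ∨ ∃ p : Fin N × ℕ, v = Sum.inl p ∧ p.2 = 1 := by
  by_cases hs : cf μ (substFam w v) ≠ 0
  · exact Or.inl hs
  · push_neg at hs
    right
    have hcne : ccA A v ≠ 0 := by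
      intro hc
      apply h
      simp only [gg, hc, map_zero, sub_zero]
      exact hs
    cases v with
    | inl p =>
      refine ⟨p, rfl, ?_⟩
      by_contra hp
      apply hcne
      have : ccA A (Sum.inl p) = if p.2 = 1 then A p.1 else 0 := rfl
      rw [this, if_neg hp]
    | inr u => exact absurd rfl hcne

lemma hge : ∀ (v : Var N) μ, cf μ (gg A w v) ≠ 0 → ψe v ≤ μ (epsV N) := by
  intro v μ h
  rcases gg_ne_cases A w h with h' | ⟨p, rfl, hp⟩
  · exact hfe w v μ h'
  · exact Nat.zero_le _

lemma hgz (hw : NormalForm A w) :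
    ∀ (v : Var N) μ, cf μ (gg A w v) ≠ 0 → ψz v ≤ tdeg μ + μ (epsV N) := by
  intro v μ h
  rcases gg_ne_cases A w h with h' | ⟨p, rfl, hp⟩
  · exact hfz A w hw v μ h'
  · have : ψz (Sum.inl p : Var N) = 0 := by
      obtain ⟨β, b⟩ := p
      simp only at hp
      subst hp
      simp [ψz]
    omega

end Families

section Ok

variable (A : Fin N → ℂ) (w : Fin N → ℕ → FPS N)

def GoodG (m μ : Var N →₀ ℕ) : Prop :=
  m (epsV N) < μ (epsV N) ∨ (m (epsV N) = μ (epsV N) ∧ tweight m < tweight μ)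

lemma good_irrefl (m : Var N →₀ ℕ) : ¬ GoodG m m := by
  intro h
  rcases h with h | ⟨_, h⟩ <;> omega

def OkG (m : Var N →₀ ℕ) (G : FPS N) : Prop :=
  cf m G = 1 ∧ ∀ μ, cf μ G ≠ 0 → μ = m ∨ GoodG m μ

lemma good_add {m₁ m₂ p q : Var N →₀ ℕ} (h₁ : p = m₁ ∨ GoodG m₁ p)
    (h₂ : q = m₂ ∨ GoodG m₂ q) (hne : ¬(p = m₁ ∧ q = m₂)) :
    GoodG (m₁ + m₂) (p + q) := by
  rcases h₁ with rfl | hg₁ <;> rcases h₂ with rfl | hg₂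
  · exact absurd ⟨rfl, rfl⟩ hne
  · simp only [GoodG, Finsupp.add_apply, tweight_add] at hg₂ ⊢; omega
  · simp only [GoodG, Finsupp.add_apply, tweight_add] at hg₁ ⊢; omega
  · simp only [GoodG, Finsupp.add_apply, tweight_add] at hg₁ hg₂ ⊢; omega

lemma okg_one : OkG (0 : Var N →₀ ℕ) 1 := by
  constructor
  · simp [cf, MvPowerSeries.coeff_one]
  · intro μ hμ
    left
    by_contra hc
    exact hμ (by simp [cf, MvPowerSeries.coeff_one, hc])

lemma okg_mul {m₁ m₂ : Var N →₀ ℕ} {G₁ G₂ : FPS N} (h₁ : OkG m₁ G₁) (h₂ : OkG m₂ G₂) :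
    OkG (m₁ + m₂) (G₁ * G₂) := by
  constructor
  · rw [cf, MvPowerSeries.coeff_mul]
    rw [Finset.sum_eq_single_of_mem (m₁, m₂) (Finset.HasAntidiagonal.mem_antidiagonal.mpr rfl)]
    · rw [← cf, ← cf, h₁.1, h₂.1, one_mul]
    · rintro ⟨p, q⟩ hmem hne
      rw [Finset.HasAntidiagonal.mem_antidiagonal] at hmem
      by_contra hc
      have hc : cf p G₁ ≠ 0 ∧ cf q G₂ ≠ 0 := mul_ne_zero_iff.mp hc
      have hgood := good_add (h₁.2 p hc.1) (h₂.2 q hc.2)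
        (fun ⟨e1, e2⟩ => hne (Prod.ext e1 e2))
      rw [hmem] at hgood
      exact good_irrefl _ hgood
  · intro μ hμ
    rw [cf, MvPowerSeries.coeff_mul] at hμ
    obtain ⟨⟨p, q⟩, hmem, hne⟩ := Finset.exists_ne_zero_of_sum_ne_zero hμ
    rw [Finset.HasAntidiagonal.mem_antidiagonal] at hmem
    rw [mul_ne_zero_iff] at hne
    rcases h₁.2 p hne.1 with hp | hp
    · rcases h₂.2 q hne.2 with hq | hq
      · left; rw [← hmem, hp, hq]
      · right; rw [← hmem]; exact good_add (Or.inl hp) (Or.inr hq) (by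
          rintro ⟨e1, e2⟩; subst e2; exact good_irrefl _ hq)
    · right; rw [← hmem]
      exact good_add (Or.inr hp) (h₂.2 q hne.2) (by
        rintro ⟨e1, e2⟩; subst e1; exact good_irrefl _ hp)

lemma okg_var (hw : NormalForm A w) (v : Var N) :
    OkG (Finsupp.single v 1) (gg A w v) := by
  cases v with
  | inr u =>
    rw [gg_eps]
    constructor
    · rw [cf_X, if_pos rfl]
    · intro μ hμ
      left
      exact cf_X_eps (μ := μ) hμ
  | inl p =>
    obtain ⟨α, n⟩ := p
    obtain ⟨R, S, hR, heq⟩ := gg_struct A w hw α n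
    rw [heq]
    have hwm : tweight (Finsupp.single (Sum.inl (α, n) : Var N) 1) = n := by
      rw [tweight_single]; exact Nat.mul_one n
    have hem : (Finsupp.single (Sum.inl (α, n) : Var N) 1) (epsV N) = 0 := by
      rw [Finsupp.single_apply, if_neg (by simp)]
    constructor
    · have c1 : cf (Finsupp.single (Sum.inl (α, n) : Var N) 1)
          (MvPowerSeries.X (Sum.inl (α, n)) : FPS N) = 1 := by
        rw [cf_X, if_pos rfl]
      have c2 : cf (Finsupp.single (Sum.inl (α, n) : Var N) 1) R = 0 := by
        by_contra hc
        have := (hR _ hc).2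
        omega
      have c3 : cf (Finsupp.single (Sum.inl (α, n) : Var N) 1)
          (MvPowerSeries.X (epsV N) ^ 2 * S) = 0 := by
        by_contra hc
        have := eps_sq S _ hc
        omega
      simp only [cf, map_add] at *
      rw [c1, c2, c3]; ring
    · intro μ hμ
      rcases cf3 hμ with h' | h' | h'
      · left
        rw [cf_X] at h'
        by_contra hc; exact h' (if_neg hc)
      · right
        right
        refine ⟨by rw [hem, (hR μ h').1], ?_⟩
        have := (hR μ h').2
        omega
      · right
        left
        have := eps_sq S μ h'
        omega

lemma okg_prodPow (hw : NormalForm A w) (m : Var N →₀ ℕ) :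
    OkG m (prodPow (gg A w) m) :=
  prodPow_ind _ OkG okg_one (fun _ _ _ _ => okg_mul) (okg_var A w hw) m

/-- positive variables of subscript exactly 1 -/
def isE1 (v : Var N) : Prop := ∃ α : Fin N, v = Sum.inl (α, 1)

lemma not_isE1_eps (u : Unit) : ¬ isE1 (Sum.inr u : Var N) := by
  rintro ⟨α, h⟩; exact Sum.inl_ne_inr h.symm

lemma not_isE1_ne (α : Fin N) (a : ℕ) (ha : a ≠ 1) : ¬ isE1 (Sum.inl (α, a) : Var N) := by
  rintro ⟨β, h⟩
  have := (Prod.ext_iff.mp (Sum.inl.inj h)).2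
  exact ha this

def OkT (m : Var N →₀ ℕ) (G : FPS N) : Prop :=
  cf m G = 1 ∧ ∀ n, cf n G ≠ 0 → n ≤ m ∧ ∀ v, ¬ isE1 v → n v = m v

lemma okt_one : OkT (0 : Var N →₀ ℕ) 1 := by
  constructor
  · simp [cf, MvPowerSeries.coeff_one]
  · intro n hn
    have : n = 0 := by
      by_contra hc
      exact hn (by simp [cf, MvPowerSeries.coeff_one, hc])
    subst this
    exact ⟨le_refl _, fun v _ => rfl⟩

lemma okt_mul {m₁ m₂ : Var N →₀ ℕ} {G₁ G₂ : FPS N} (h₁ : OkT m₁ G₁) (h₂ : OkT m₂ G₂) :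
    OkT (m₁ + m₂) (G₁ * G₂) := by
  constructor
  · rw [cf, MvPowerSeries.coeff_mul]
    rw [Finset.sum_eq_single_of_mem (m₁, m₂) (Finset.HasAntidiagonal.mem_antidiagonal.mpr rfl)]
    · rw [← cf, ← cf, h₁.1, h₂.1, one_mul]
    · rintro ⟨p, q⟩ hmem hne
      rw [Finset.HasAntidiagonal.mem_antidiagonal] at hmem
      by_contra hc
      have hc : cf p G₁ ≠ 0 ∧ cf q G₂ ≠ 0 := mul_ne_zero_iff.mp hc
      have hp := (h₁.2 p hc.1).1
      have hq := (h₂.2 q hc.2).1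
      apply hne
      have hpe : p = m₁ := by
        ext v
        have e1 := Finsupp.le_def.mp hp v
        have e2 := Finsupp.le_def.mp hq v
        have e3 : p v + q v = m₁ v + m₂ v := by
          have := congrFun (congrArg (fun (z : Var N →₀ ℕ) => ⇑z) hmem) v
          simpa using this
        omega
      have hqe : q = m₂ := by
        ext v
        have e1 := Finsupp.le_def.mp hp v
        have e2 := Finsupp.le_def.mp hq v
        have e3 : p v + q v = m₁ v + m₂ v := by
          have := congrFun (congrArg (fun (z : Var N →₀ ℕ) => ⇑z) hmem) v
          simpa using this
        omega
      exact Prod.ext hpe hqe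
  · intro n hn
    rw [cf, MvPowerSeries.coeff_mul] at hn
    obtain ⟨⟨p, q⟩, hmem, hne⟩ := Finset.exists_ne_zero_of_sum_ne_zero hn
    rw [Finset.HasAntidiagonal.mem_antidiagonal] at hmem
    rw [mul_ne_zero_iff] at hne
    obtain ⟨hp1, hp2⟩ := h₁.2 p hne.1
    obtain ⟨hq1, hq2⟩ := h₂.2 q hne.2
    subst hmem
    constructor
    · exact add_le_add hp1 hq1
    · intro v hv
      simp only [Finsupp.add_apply]
      rw [hp2 v hv, hq2 v hv]

lemma okt_var (v : Var N) : OkT (Finsupp.single v 1) (tauF A v) := by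
  have hC : ∀ n : Var N →₀ ℕ, cf n ((MvPowerSeries.C : ℂ →+* FPS N) (ccA A v)) ≠ 0 →
      n = 0 ∧ isE1 v := by
    intro n hn
    rw [cf_C] at hn
    constructor
    · by_contra hc; exact hn (if_neg hc)
    · have hcc : ccA A v ≠ 0 := by
        intro hc; rw [hc] at hn; simp at hn
      cases v with
      | inl p =>
        obtain ⟨α, a⟩ := p
        refine ⟨α, ?_⟩
        have : ccA A (Sum.inl (α, a)) = if a = 1 then A α else 0 := rfl
        rw [this] at hcc
        by_cases ha : a = 1
        · rw [ha]
        · exact absurd (if_neg ha) hcc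
      | inr u => exact absurd rfl hcc
  constructor
  · have c1 : cf (Finsupp.single v 1) (MvPowerSeries.X v : FPS N) = 1 := by
      rw [cf_X, if_pos rfl]
    have c2 : cf (Finsupp.single v 1) ((MvPowerSeries.C : ℂ →+* FPS N) (ccA A v)) = 0 := by
      by_contra hc
      have h0 := (hC _ hc).1
      have h1 : (1 : ℕ) = 0 := by
        have := congrFun (congrArg (fun (z : Var N →₀ ℕ) => ⇑z) h0) v
        simpa using this
      exact one_ne_zero h1
    rw [tauF]
    simp only [cf, map_add] at *
    rw [c1, c2, add_zero]
  · intro n hn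
    rw [tauF] at hn
    have : cf n (MvPowerSeries.X v : FPS N) ≠ 0 ∨
        cf n ((MvPowerSeries.C : ℂ →+* FPS N) (ccA A v)) ≠ 0 := by
      by_contra hc
      push_neg at hc
      apply hn
      simp only [cf, map_add] at *
      rw [hc.1, hc.2, add_zero]
    rcases this with h' | h'
    · have : n = Finsupp.single v 1 := by
        rw [cf_X] at h'
        by_contra hc; exact h' (if_neg hc)
      subst this
      exact ⟨le_refl _, fun _ _ => rfl⟩
    · obtain ⟨h0, hv⟩ := hC _ h'
      subst h0
      refine ⟨zero_le, ?_⟩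
      intro v' hv'
      rw [Finsupp.zero_apply, Finsupp.single_apply, if_neg]
      intro hc
      exact hv' (hc ▸ hv)

lemma okt_prodPow (m : Var N →₀ ℕ) : OkT m (prodPow (tauF A) m) :=
  prodPow_ind _ OkT okt_one (fun _ _ _ _ => okt_mul) (okt_var A) m

end Ok

section Poly

variable (A : Fin N → ℂ) (w : Fin N → ℕ → FPS N)

def PolyP (m : Var N →₀ ℕ) : MvPolynomial (Var N) ℂ :=
  m.prod fun v k => (MvPolynomial.X v + MvPolynomial.C (ccA A v)) ^ k

lemma polyP_coe (m : Var N →₀ ℕ) : ((PolyP A m : MvPolynomial (Var N) ℂ) : FPS N)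
    = prodPow (tauF A) m := by
  have : ((PolyP A m : MvPolynomial (Var N) ℂ) : FPS N)
      = MvPolynomial.coeToMvPowerSeries.ringHom (PolyP A m) := rfl
  rw [this, PolyP, map_finsuppProd]
  apply Finsupp.prod_congr
  intro v hv
  rw [map_pow, map_add]
  have h1 : MvPolynomial.coeToMvPowerSeries.ringHom (MvPolynomial.X v : MvPolynomial (Var N) ℂ)
      = MvPowerSeries.X v := by
    rw [MvPolynomial.coeToMvPowerSeries.ringHom_apply, MvPolynomial.coe_X]
  have h2 : MvPolynomial.coeToMvPowerSeries.ringHom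
      (MvPolynomial.C (ccA A v) : MvPolynomial (Var N) ℂ)
      = (MvPowerSeries.C : ℂ →+* FPS N) (ccA A v) := by
    rw [MvPolynomial.coeToMvPowerSeries.ringHom_apply, MvPolynomial.coe_C]
  rw [h1, h2]
  rfl

lemma eval2_polyP (m : Var N →₀ ℕ) :
    MvPolynomial.eval₂ ((MvPowerSeries.C : ℂ →+* FPS N)) (gg A w) (PolyP A m)
      = prodPow (substFam w) m := by
  have : MvPolynomial.eval₂ ((MvPowerSeries.C : ℂ →+* FPS N)) (gg A w) (PolyP A m)
      = MvPolynomial.eval₂Hom ((MvPowerSeries.C : ℂ →+* FPS N)) (gg A w) (PolyP A m) := rfl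
  rw [this, PolyP, map_finsuppProd]
  apply Finsupp.prod_congr
  intro v hv
  rw [map_pow, map_add]
  rw [MvPolynomial.eval₂Hom_X', MvPolynomial.eval₂Hom_C]
  rw [gg_add_C]

/-- the heart of the change of variables: evaluating a monomial of the original family
is the same as evaluating the translated monomial along the constant-free family. -/
lemma key1 (m μ : Var N →₀ ℕ) :
    cf μ (prodPow (substFam w) m)
      = ∑ᶠ n : Var N →₀ ℕ, cf n (prodPow (tauF A) m) * cf μ (prodPow (gg A w) n) := by
  have hsupp : (Function.support fun n : Var N →₀ ℕ =>
      cf n (prodPow (tauF A) m) * cf μ (prodPow (gg A w) n)) ⊆ ↑(PolyP A m).support := by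
    intro n hn
    have hn' : cf n (prodPow (tauF A) m) * cf μ (prodPow (gg A w) n) ≠ 0 := hn
    have h1 : cf n (prodPow (tauF A) m) ≠ 0 := left_ne_zero_of_mul hn'
    have h2 : MvPolynomial.coeff n (PolyP A m) ≠ 0 := by
      rw [← MvPolynomial.coeff_coe, polyP_coe]
      exact h1
    exact MvPolynomial.mem_support_iff.mpr h2
  rw [finsum_eq_finset_sum_of_support_subset _ hsupp]
  rw [← eval2_polyP A w m, MvPolynomial.eval₂_eq]
  rw [cf, map_sum]
  apply Finset.sum_congr rfl
  intro n hn
  rw [MvPowerSeries.coeff_C_mul]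
  have hcoe : cf n (prodPow (tauF A) m) = MvPolynomial.coeff n (PolyP A m) := by
    rw [← polyP_coe]
    exact MvPolynomial.coeff_coe _ _
  rw [hcoe]
  rfl

end Poly

lemma exists_of_finsum_ne_zero {α : Type*} {f : α → ℂ} (h : (∑ᶠ x, f x) ≠ 0) :
    ∃ x, f x ≠ 0 := by
  by_contra hc
  push_neg at hc
  apply h
  rw [show f = fun _ => 0 from funext hc]
  exact finsum_zero

section Main

variable (A : Fin N → ℂ) (w : Fin N → ℕ → FPS N)

/-- all shapes appearing in slices `≤ K` of `D` -/
def PS (D : FPS N) (K : ℕ) : Set ((Fin N × ℕ) → ℕ) :=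
  ⋃ k ∈ Set.Iic K, {s | ∃ m : Var N →₀ ℕ, cf m D ≠ 0 ∧ m (epsV N) = k ∧ posShape m = s}

lemma PS_finite {D : FPS N} (hD : IsDiffPoly D) (K : ℕ) : (PS D K).Finite :=
  Set.Finite.biUnion (Set.finite_Iic K) (fun k _ => hD k)

lemma mem_PS {D : FPS N} {m : Var N →₀ ℕ} (hm : cf m D ≠ 0) {K : ℕ}
    (hK : m (epsV N) ≤ K) : posShape m ∈ PS D K :=
  Set.mem_biUnion (show m (epsV N) ∈ Set.Iic K from hK) ⟨m, hm, rfl, rfl⟩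

lemma eps_le_of_cf_g {n μ : Var N →₀ ℕ} (h : cf μ (prodPow (gg A w) n) ≠ 0) :
    n (epsV N) ≤ μ (epsV N) := by
  have hbound := coeff_prodPow_wsum_le (fun ν : Var N →₀ ℕ => ν (epsV N)) (by simp)
    (fun a b => by simp) ψe (gg A w) (hge A w) n μ h
  have hbound' : wsum ψe n ≤ μ (epsV N) := hbound
  have h1 := apply_mul_le_wsum ψe n (epsV N)
  have hψ : ψe (epsV N) = 1 := rfl
  rw [hψ, mul_one] at h1
  omega

lemma zero_le_of_cf_g (hw : NormalForm A w) {n μ : Var N →₀ ℕ}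
    (h : cf μ (prodPow (gg A w) n) ≠ 0) (α : Fin N) :
    n (Sum.inl (α, 0)) ≤ tdeg μ + μ (epsV N) := by
  have hz : tdeg (0 : Var N →₀ ℕ) = 0 := Finsupp.sum_zero_index
  have hbound := coeff_prodPow_wsum_le (fun ν : Var N →₀ ℕ => tdeg ν + ν (epsV N))
    (by simp [hz])
    (fun a b => by
      show tdeg (a + b) + (a + b) (epsV N) = (tdeg a + a (epsV N)) + (tdeg b + b (epsV N))
      rw [tdeg_add, Finsupp.add_apply]; ring) ψz (gg A w)
    (hgz A w hw) n μ h
  have hbound' : wsum ψz n ≤ tdeg μ + μ (epsV N) := hbound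
  have h1 := apply_mul_le_wsum ψz n (Sum.inl (α, 0))
  have hψ : ψz (Sum.inl (α, (0:ℕ)) : Var N) = 1 := by simp [ψz]
  rw [hψ, mul_one] at h1
  omega

lemma eps_le_of_cf_f {n μ : Var N →₀ ℕ} (h : cf μ (prodPow (substFam w) n) ≠ 0) :
    n (epsV N) ≤ μ (epsV N) := by
  have hbound := coeff_prodPow_wsum_le (fun ν : Var N →₀ ℕ => ν (epsV N)) (by simp)
    (fun a b => by simp) ψe (substFam w) (hfe w) n μ h
  have hbound' : wsum ψe n ≤ μ (epsV N) := hbound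
  have h1 := apply_mul_le_wsum ψe n (epsV N)
  have hψ : ψe (epsV N) = 1 := rfl
  rw [hψ, mul_one] at h1
  omega

lemma zero_le_of_cf_f (hw : NormalForm A w) {n μ : Var N →₀ ℕ}
    (h : cf μ (prodPow (substFam w) n) ≠ 0) (α : Fin N) :
    n (Sum.inl (α, 0)) ≤ tdeg μ + μ (epsV N) := by
  have hz : tdeg (0 : Var N →₀ ℕ) = 0 := Finsupp.sum_zero_index
  have hbound := coeff_prodPow_wsum_le (fun ν : Var N →₀ ℕ => tdeg ν + ν (epsV N))
    (by simp [hz])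
    (fun a b => by
      show tdeg (a + b) + (a + b) (epsV N) = (tdeg a + a (epsV N)) + (tdeg b + b (epsV N))
      rw [tdeg_add, Finsupp.add_apply]; ring) ψz (substFam w)
    (hfz A w hw) n μ h
  have hbound' : wsum ψz n ≤ tdeg μ + μ (epsV N) := hbound
  have h1 := apply_mul_le_wsum ψz n (Sum.inl (α, 0))
  have hψ : ψz (Sum.inl (α, (0:ℕ)) : Var N) = 1 := by simp [ψz]
  rw [hψ, mul_one] at h1
  omega

lemma fin_f (hw : NormalForm A w) {D : FPS N} (hD : IsDiffPoly D) (μ : Var N →₀ ℕ) :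
    {m : Var N →₀ ℕ | cf m D ≠ 0 ∧ cf μ (prodPow (substFam w) m) ≠ 0}.Finite := by
  apply Set.Finite.subset (finstar (PS D (μ (epsV N))) (PS_finite hD _) (μ (epsV N))
    (tdeg μ + μ (epsV N)))
  rintro m ⟨h1, h2⟩
  have he := eps_le_of_cf_f w h2
  exact ⟨mem_PS h1 he, he, fun α => zero_le_of_cf_f A w hw h2 α⟩

/-- coefficients of the translated monomials -/
def tt (m n : Var N →₀ ℕ) : ℂ := cf n (prodPow (tauF A) m)

lemma tt_self (m : Var N →₀ ℕ) : tt A m m = 1 := (okt_prodPow A m).1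

lemma tt_struct {m n : Var N →₀ ℕ} (h : tt A m n ≠ 0) :
    n ≤ m ∧ ∀ v, ¬ isE1 v → n v = m v := (okt_prodPow A m).2 n h

def n1 (n : Var N →₀ ℕ) : ℕ := ∑ α : Fin N, n (Sum.inl (α, 1))

lemma n1_lt {n m : Var N →₀ ℕ} (hle : n ≤ m) (hagree : ∀ v, ¬ isE1 v → n v = m v)
    (hne : m ≠ n) : n1 n < n1 m := by
  have hex : ∃ v, n v ≠ m v := by
    by_contra hc
    push_neg at hc
    exact hne (Finsupp.ext fun v => (hc v).symm)
  obtain ⟨v, hv⟩ := hex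
  have hE1 : isE1 v := by
    by_contra hE
    exact hv (hagree v hE)
  obtain ⟨β, rfl⟩ := hE1
  apply Finset.sum_lt_sum (fun α _ => Finsupp.le_def.mp hle _)
  exact ⟨β, Finset.mem_univ β, lt_of_le_of_ne (Finsupp.le_def.mp hle _) hv⟩

lemma supp_tD_fin {D : FPS N} (hD : IsDiffPoly D) (n : Var N →₀ ℕ) :
    {m : Var N →₀ ℕ | cf m D ≠ 0 ∧ tt A m n ≠ 0}.Finite := by
  apply Set.Finite.subset (finstar (PS D (n (epsV N))) (PS_finite hD _) (n (epsV N))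
    (Finset.univ.sup fun α : Fin N => n (Sum.inl (α, 0))))
  rintro m ⟨h1, h2⟩
  obtain ⟨hle, hagree⟩ := tt_struct A h2
  have heps : m (epsV N) = n (epsV N) := (hagree _ (not_isE1_eps ())).symm
  refine ⟨mem_PS h1 (le_of_eq heps), le_of_eq heps, fun α => ?_⟩
  rw [← hagree (Sum.inl (α, 0)) (not_isE1_ne α 0 (by omega))]
  exact Finset.le_sup (f := fun α : Fin N => n (Sum.inl (α, 0))) (Finset.mem_univ α)

lemma T1 {D : FPS N} (hD : IsDiffPoly D) : IsDiffPoly (evalFam (tauF A) D) := by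
  intro k
  apply Set.Finite.subset (shapeclose _ (hD k))
  rintro s ⟨n, hn, hk, rfl⟩
  rw [cf_eval] at hn
  obtain ⟨m, hm⟩ := exists_of_finsum_ne_zero hn
  have h1 : cf m D ≠ 0 := left_ne_zero_of_mul hm
  have h2 : tt A m n ≠ 0 := right_ne_zero_of_mul hm
  obtain ⟨hle, hagree⟩ := tt_struct A h2
  have heps : m (epsV N) = k := by
    rw [← hk]
    exact (hagree _ (not_isE1_eps ())).symm
  refine ⟨posShape m, ⟨m, h1, heps, rfl⟩, ?_, ?_⟩
  · intro p
    simp only [posShape]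
    split_ifs with hp
    · exact Finsupp.le_def.mp hle _
    · exact le_refl 0
  · rintro ⟨α, a⟩ ha
    simp only [posShape]
    split_ifs with hp
    · exact hagree (Sum.inl (α, a)) (not_isE1_ne α a ha)
    · rfl

lemma T2 {D : FPS N} (hD : IsDiffPoly D) (hT0 : evalFam (tauF A) D = 0) : D = 0 := by
  have hB : ∀ k : ℕ, ∃ B : ℕ, ∀ m : Var N →₀ ℕ,
      m (epsV N) = k → cf m D ≠ 0 → n1 m ≤ B := by
    intro k
    have himg := (hD k).image (fun s : (Fin N × ℕ) → ℕ => ∑ α : Fin N, s (α, 1))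
    obtain ⟨B, hBmem⟩ := himg.bddAbove
    refine ⟨B, fun m hk hm => ?_⟩
    have heq : n1 m = ∑ α : Fin N, posShape m (α, 1) := by
      apply Finset.sum_congr rfl
      intro α _
      simp [posShape]
    rw [heq]
    exact hBmem (Set.mem_image_of_mem _ ⟨m, hm, hk, rfl⟩)
  choose Bk hBk using hB
  have main : ∀ d (n : Var N →₀ ℕ), Bk (n (epsV N)) + 1 ≤ n1 n + d → cf n D = 0 := by
    intro d
    induction d with
    | zero =>
      intro n hn
      by_contra hc
      have := hBk _ n rfl hc
      omega
    | succ d ih =>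
      intro n hn
      have hTn : cf n (evalFam (tauF A) D) = 0 := by rw [hT0]; simp [cf]
      rw [cf_eval] at hTn
      have hsub : (Function.support fun m : Var N →₀ ℕ =>
          cf m D * cf n (prodPow (tauF A) m)) ⊆
          ↑((supp_tD_fin A hD n).toFinset ∪ {n}) := by
        intro m hm
        have hm' : cf m D * tt A m n ≠ 0 := hm
        simp only [Finset.coe_union, Set.mem_union, Set.Finite.coe_toFinset]
        exact Or.inl ⟨left_ne_zero_of_mul hm', right_ne_zero_of_mul hm'⟩
      rw [finsum_eq_finset_sum_of_support_subset _ hsub] at hTn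
      rw [Finset.sum_eq_single_of_mem n
        (Finset.mem_union_right _ (Finset.mem_singleton_self n)) ?_] at hTn
      · have := tt_self A n
        rw [show cf n (prodPow (tauF A) n) = tt A n n from rfl, this, mul_one] at hTn
        exact hTn
      · intro m hmem hne
        by_contra hc
        have hc1 : cf m D ≠ 0 := left_ne_zero_of_mul hc
        have hc2 : tt A m n ≠ 0 := right_ne_zero_of_mul hc
        obtain ⟨hle, hagree⟩ := tt_struct A hc2
        have hlt := n1_lt hle hagree hne
        have hke : m (epsV N) = n (epsV N) := (hagree _ (not_isE1_eps ())).symm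
        have := ih m (by rw [hke]; omega)
        exact hc1 this
  apply MvPowerSeries.ext
  intro n
  have := main (Bk (n (epsV N)) + 1) n (by omega)
  rw [show (MvPowerSeries.coeff n) D = cf n D from rfl, this]
  simp

lemma E2 (hw : NormalForm A w) (T' : FPS N)
    (h0 : ∀ μ, cf μ (evalFam (gg A w) T') = 0) : T' = 0 := by
  have H : ∀ k (n : Var N →₀ ℕ), n (epsV N) = k → cf n T' = 0 := by
    intro k
    induction k using Nat.strong_induction_on with
    | _ k ihk =>
      have H2 : ∀ Wv (n : Var N →₀ ℕ), n (epsV N) = k → tweight n = Wv → cf n T' = 0 := by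
        intro Wv
        induction Wv using Nat.strong_induction_on with
        | _ Wv ihW =>
          intro n hk hW
          have h0n := h0 n
          rw [cf_eval] at h0n
          have hside : ∀ m : Var N →₀ ℕ, m ≠ n →
              cf m T' * cf n (prodPow (gg A w) m) = 0 := by
            intro m hm
            rcases eq_or_ne (cf n (prodPow (gg A w) m)) 0 with h | h
            · rw [h, mul_zero]
            · rcases (okg_prodPow A w hw m).2 n h with he | hg
              · exact absurd he.symm hm
              · rcases hg with hlt | ⟨heq, hwlt⟩
                · rw [ihk (m (epsV N)) (by omega) m rfl, zero_mul]
                · rw [ihW (tweight m) (by omega) m (by omega) rfl, zero_mul]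
          rw [finsum_eq_single _ n hside, (okg_prodPow A w hw n).1, mul_one] at h0n
          exact h0n
      intro n hk
      exact H2 (tweight n) n hk rfl
  apply MvPowerSeries.ext
  intro n
  rw [show (MvPowerSeries.coeff n) T' = cf n T' from rfl, H (n (epsV N)) n rfl]
  simp

lemma tt_supp (m μ : Var N →₀ ℕ) :
    (Function.support fun n : Var N →₀ ℕ =>
      tt A m n * cf μ (prodPow (gg A w) n)) ⊆ ↑(PolyP A m).support := by
  intro n hn
  have hn' : tt A m n * cf μ (prodPow (gg A w) n) ≠ 0 := hn
  have h1 : cf n (prodPow (tauF A) m) ≠ 0 := left_ne_zero_of_mul hn'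
  have h2 : MvPolynomial.coeff n (PolyP A m) ≠ 0 := by
    rw [← MvPolynomial.coeff_coe, polyP_coe]
    exact h1
  exact MvPolynomial.mem_support_iff.mpr h2

lemma T3 (hw : NormalForm A w) {D : FPS N} (hD : IsDiffPoly D) (μ : Var N →₀ ℕ) :
    cf μ (evalFam (gg A w) (evalFam (tauF A) D)) = cf μ (evalFam (substFam w) D) := by
  classical
  set H : (Var N →₀ ℕ) × (Var N →₀ ℕ) → ℂ :=
    fun p => cf p.1 D * tt A p.1 p.2 * cf μ (prodPow (gg A w) p.2) with hH
  have hSH : (Function.support H).Finite := by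
    apply Set.Finite.subset (Set.Finite.prod
      (finstar (PS D (μ (epsV N))) (PS_finite hD _) (μ (epsV N)) (tdeg μ + μ (epsV N)))
      (finstar {s : (Fin N × ℕ) → ℕ | ∃ s' ∈ PS D (μ (epsV N)), (∀ p, s p ≤ s' p) ∧
          ∀ p : Fin N × ℕ, p.2 ≠ 1 → s p = s' p}
        (shapeclose _ (PS_finite hD _)) (μ (epsV N)) (tdeg μ + μ (epsV N))))
    rintro ⟨m, n⟩ hp
    have hp' : cf m D * tt A m n * cf μ (prodPow (gg A w) n) ≠ 0 := hp
    have h3 : cf μ (prodPow (gg A w) n) ≠ 0 := right_ne_zero_of_mul hp'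
    have h12 := left_ne_zero_of_mul hp'
    have h1 : cf m D ≠ 0 := left_ne_zero_of_mul h12
    have h2 : tt A m n ≠ 0 := right_ne_zero_of_mul h12
    obtain ⟨hle, hagree⟩ := tt_struct A h2
    have hne : n (epsV N) ≤ μ (epsV N) := eps_le_of_cf_g A w h3
    have hme : m (epsV N) = n (epsV N) := (hagree _ (not_isE1_eps ())).symm
    constructor
    · refine ⟨mem_PS h1 (le_trans hme.le hne), le_trans hme.le hne, fun α => ?_⟩
      rw [← hagree (Sum.inl (α, 0)) (not_isE1_ne α 0 (by omega))]
      exact zero_le_of_cf_g A w hw h3 α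
    · refine ⟨⟨posShape m, mem_PS h1 (le_trans hme.le hne), ?_, ?_⟩, hne,
        fun α => zero_le_of_cf_g A w hw h3 α⟩
      · intro p
        simp only [posShape]
        split_ifs with hp1
        · exact Finsupp.le_def.mp hle _
        · exact le_refl 0
      · rintro ⟨α, a⟩ ha
        simp only [posShape]
        split_ifs with hp1
        · exact hagree (Sum.inl (α, a)) (not_isE1_ne α a ha)
        · rfl
  set Pfin := hSH.toFinset with hPfin
  set P₁ := Pfin.image Prod.fst with hP₁
  set P₂ := Pfin.image Prod.snd with hP₂
  have mem1 : ∀ m n : Var N →₀ ℕ, H (m, n) ≠ 0 → m ∈ P₁ ∧ n ∈ P₂ := by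
    intro m n hmn
    have : (m, n) ∈ Pfin := by
      rw [hPfin, Set.Finite.mem_toFinset]
      exact hmn
    exact ⟨Finset.mem_image.mpr ⟨(m, n), this, rfl⟩, Finset.mem_image.mpr ⟨(m, n), this, rfl⟩⟩
  have step1 : ∀ m : Var N →₀ ℕ, cf m D * cf μ (prodPow (substFam w) m)
      = ∑ᶠ n : Var N →₀ ℕ, H (m, n) := by
    intro m
    rw [key1 A w m μ]
    rw [mul_finsum' (fun n : Var N →₀ ℕ => cf n (prodPow (tauF A) m) * cf μ (prodPow (gg A w) n))
      _ ((PolyP A m).support.finite_toSet.subset (tt_supp A w m μ))]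
    apply finsum_congr
    intro n
    simp only [hH, tt]
    ring
  have rhs : cf μ (evalFam (substFam w) D) = ∑ m ∈ P₁, ∑ n ∈ P₂, H (m, n) := by
    rw [cf_eval]
    rw [finsum_eq_finset_sum_of_support_subset _ (s := P₁) ?_]
    · apply Finset.sum_congr rfl
      intro m hm
      rw [step1 m]
      apply finsum_eq_finset_sum_of_support_subset
      intro n hn
      exact (mem1 m n hn).2
    · intro m hm
      have hm' : cf m D * cf μ (prodPow (substFam w) m) ≠ 0 := hm
      rw [step1 m] at hm'
      obtain ⟨n, hn⟩ := exists_of_finsum_ne_zero hm'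
      exact (mem1 m n hn).1
  have lhs : cf μ (evalFam (gg A w) (evalFam (tauF A) D)) = ∑ n ∈ P₂, ∑ m ∈ P₁, H (m, n) := by
    rw [cf_eval]
    rw [finsum_eq_finset_sum_of_support_subset _ (s := P₂) ?_]
    · apply Finset.sum_congr rfl
      intro n hn
      have hT : cf n (evalFam (tauF A) D) = ∑ᶠ m : Var N →₀ ℕ, cf m D * tt A m n := cf_eval _ _ _
      rw [hT]
      rw [finsum_mul' _ _ ((supp_tD_fin A hD n).subset (by
        intro m hm
        have hm' : cf m D * tt A m n ≠ 0 := hm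
        exact ⟨left_ne_zero_of_mul hm', right_ne_zero_of_mul hm'⟩))]
      apply finsum_eq_finset_sum_of_support_subset
      intro m hm
      have hm' : cf m D * tt A m n * cf μ (prodPow (gg A w) n) ≠ 0 := hm
      exact (mem1 m n hm').1
    · intro n hn
      have hn' : cf n (evalFam (tauF A) D) * cf μ (prodPow (gg A w) n) ≠ 0 := hn
      have h1 : cf n (evalFam (tauF A) D) ≠ 0 := left_ne_zero_of_mul hn'
      have h2 : cf μ (prodPow (gg A w) n) ≠ 0 := right_ne_zero_of_mul hn'
      rw [cf_eval] at h1
      obtain ⟨m, hm⟩ := exists_of_finsum_ne_zero h1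
      have : H (m, n) ≠ 0 := by
        rw [hH]
        exact mul_ne_zero hm h2
      exact (mem1 m n this).2
  rw [lhs, rhs, Finset.sum_comm]

end Main

end St1

/-- If the family `w̃^α_n` is in normal form and `P, Q ∈ 𝒜̂_w` are
differential polynomials with `P|_{w^α_a = w̃^α_a} = Q|_{w^α_a = w̃^α_a}`, then `P = Q`. -/
theorem statement1 (N : ℕ) (hN : 1 ≤ N) (A : Fin N → ℂ)
    (w : Fin N → ℕ → FPS N) (hw : NormalForm A w)
    (P Q : FPS N) (hP : IsDiffPoly P) (hQ : IsDiffPoly Q)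
    (h : evalFam (substFam w) P = evalFam (substFam w) Q) : P = Q := by
  classical
  set D : FPS N := P - Q with hDdef
  have hcfD : ∀ m : Var N →₀ ℕ, cf m D = cf m P - cf m Q := by
    intro m
    rw [hDdef]
    simp [cf, map_sub]
  have hD : IsDiffPoly D := by
    intro k
    apply Set.Finite.subset ((hP k).union (hQ k))
    rintro s ⟨m, hm, hk, rfl⟩
    have : cf m P ≠ 0 ∨ cf m Q ≠ 0 := by
      by_contra hc
      push_neg at hc
      apply hm
      rw [hcfD, hc.1, hc.2, sub_zero]
    rcases this with h' | h'
    · exact Or.inl ⟨m, h', hk, rfl⟩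
    · exact Or.inr ⟨m, h', hk, rfl⟩
  have hev : ∀ μ, cf μ (evalFam (substFam w) D) = 0 := by
    intro μ
    rw [St1.cf_eval]
    have hfinP : (Function.support fun m : Var N →₀ ℕ =>
        cf m P * cf μ (prodPow (substFam w) m)).Finite := by
      apply (St1.fin_f A w hw hP μ).subset
      intro m hm
      have hm' : cf m P * cf μ (prodPow (substFam w) m) ≠ 0 := hm
      exact ⟨left_ne_zero_of_mul hm', right_ne_zero_of_mul hm'⟩
    have hfinQ : (Function.support fun m : Var N →₀ ℕ =>
        cf m Q * cf μ (prodPow (substFam w) m)).Finite := by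
      apply (St1.fin_f A w hw hQ μ).subset
      intro m hm
      have hm' : cf m Q * cf μ (prodPow (substFam w) m) ≠ 0 := hm
      exact ⟨left_ne_zero_of_mul hm', right_ne_zero_of_mul hm'⟩
    have e1 : (fun m : Var N →₀ ℕ => cf m D * cf μ (prodPow (substFam w) m))
        = fun m => cf m P * cf μ (prodPow (substFam w) m)
            - cf m Q * cf μ (prodPow (substFam w) m) := by
      funext m
      rw [hcfD, sub_mul]
    rw [e1, finsum_sub_distrib hfinP hfinQ]
    have h2 : cf μ (evalFam (substFam w) P) = cf μ (evalFam (substFam w) Q) := by rw [h]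
    rw [St1.cf_eval, St1.cf_eval] at h2
    rw [h2, sub_self]
  have h0 : ∀ μ, cf μ (evalFam (St1.gg A w) (evalFam (St1.tauF A) D)) = 0 := by
    intro μ
    rw [St1.T3 A w hw hD μ]
    exact hev μ
  have hT0 : evalFam (St1.tauF A) D = 0 := St1.E2 A w hw _ h0
  have hD0 : D = 0 := St1.T2 A hD hT0
  have := sub_eq_zero.mp (hDdef ▸ hD0)
  exact this
end
end

section
/- Let T be a finite rooted tree with vertex set V(T) and edge set E(T). For an integer k ≥ 1, call a function l : V(T) → {1,…,k} a surjective level function of degree k if l takes the value 1 at the root, l(v) < l(w) whenever w is a child of v, and l is surjective onto {1,…,k}. Then Σ_{k≥1} Σ_l (−1)^{k−1} = (−1)^{|E(T)|}, where the inner sum runs over all surjective level functions of degree k (the total sum is finite since necessarily k ≤ |V(T)|, and |E(T)| = |V(T)| − 1). -/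
open scoped Classical
open Finset

namespace S8

variable {V : Type} [Fintype V] [DecidableEq V]

/-- Level functions on the sub-finset `s` of degree `k`, encoded with values in
`Fin (Fintype.card V + 1)` and extended by `0` off `s`. -/
noncomputable def LF (C : V → V → Prop) (s : Finset V) (k : ℕ) :
    Finset (V → Fin (Fintype.card V + 1)) :=
  Finset.univ.filter fun l =>
    (∀ v, v ∉ s → (l v : ℕ) = 0) ∧
    (∀ v ∈ s, ∀ w ∈ s, C v w → (l v : ℕ) < (l w : ℕ)) ∧
    (∀ v ∈ s, 1 ≤ (l v : ℕ) ∧ (l v : ℕ) ≤ k) ∧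
    (∀ i : ℕ, 1 ≤ i → i ≤ k → ∃ v ∈ s, (l v : ℕ) = i)

lemma mem_LF {C : V → V → Prop} {s : Finset V} {k : ℕ}
    {l : V → Fin (Fintype.card V + 1)} :
    l ∈ LF C s k ↔
      (∀ v, v ∉ s → (l v : ℕ) = 0) ∧
      (∀ v ∈ s, ∀ w ∈ s, C v w → (l v : ℕ) < (l w : ℕ)) ∧
      (∀ v ∈ s, 1 ≤ (l v : ℕ) ∧ (l v : ℕ) ≤ k) ∧
      (∀ i : ℕ, 1 ≤ i → i ≤ k → ∃ v ∈ s, (l v : ℕ) = i) := by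
  simp [LF]

lemma LF_empty_zero (C : V → V → Prop) :
    (LF C (∅ : Finset V) 0).card = 1 := by
  have h : LF C (∅ : Finset V) 0 = {fun _ => 0} := by
    ext l
    simp only [mem_LF, Finset.mem_singleton]
    constructor
    · rintro ⟨h0, -, -, -⟩
      funext v
      exact Fin.ext (h0 v (by simp))
    · rintro rfl
      refine ⟨fun v _ => rfl, ?_, ?_, ?_⟩
      · simp
      · simp
      · intro i h1 h2
        exact absurd (h1.trans h2) (by norm_num)
  rw [h]
  simp

lemma LF_zero {C : V → V → Prop} {s : Finset V} (hs : s.Nonempty) :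
    LF C s 0 = ∅ := by
  rw [Finset.eq_empty_iff_forall_notMem]
  intro l hl
  obtain ⟨v, hv⟩ := hs
  have := (mem_LF.1 hl).2.2.1 v hv
  omega

lemma LF_eq_empty_of_gt {C : V → V → Prop} {s : Finset V} {k : ℕ} (h : s.card < k) :
    LF C s k = ∅ := by
  rw [Finset.eq_empty_iff_forall_notMem]
  intro l hl
  obtain ⟨-, -, -, hsurj⟩ := mem_LF.1 hl
  have hk1 : 1 ≤ k := by omega
  have hne : Nonempty V := by
    obtain ⟨v, -, -⟩ := hsurj 1 le_rfl hk1
    exact ⟨v⟩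
  set f : ℕ → V := fun i =>
    if hi : 1 ≤ i ∧ i ≤ k then (hsurj i hi.1 hi.2).choose else Classical.arbitrary V
    with hf
  have hmem : ∀ i ∈ Finset.Icc 1 k, f i ∈ s := by
    intro i hi
    simp only [Finset.mem_Icc] at hi
    rw [hf]
    simp only [hi, and_self, dif_pos]
    exact (hsurj i hi.1 hi.2).choose_spec.1
  have hval : ∀ i ∈ Finset.Icc 1 k, (l (f i) : ℕ) = i := by
    intro i hi
    simp only [Finset.mem_Icc] at hi
    rw [hf]
    simp only [hi, and_self, dif_pos]
    exact (hsurj i hi.1 hi.2).choose_spec.2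
  have hcard : s.card < (Finset.Icc 1 k).card := by
    rw [Nat.card_Icc]; omega
  obtain ⟨i, hi, j, hj, hij, hfij⟩ :=
    Finset.exists_ne_map_eq_of_card_lt_of_maps_to hcard hmem
  apply hij
  rw [← hval i hi, ← hval j hj, hfij]

/-- The "`s`-leaves": elements of `s` with no `C`-child inside `s`. -/
noncomputable def lv (C : V → V → Prop) (s : Finset V) : Finset V :=
  s.filter fun v => ∀ w ∈ s, ¬ C v w

lemma LF_card_rec (C : V → V → Prop) (s : Finset V) (k : ℕ) (hk : 1 ≤ k)
    (hk' : k ≤ Fintype.card V) :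
    (LF C s k).card =
      ∑ B ∈ (lv C s).powerset.erase ∅, (LF C (s \ B) (k - 1)).card := by
  have hfib : ∀ l ∈ LF C s k,
      (s.filter fun v => (l v : ℕ) = k) ∈ (lv C s).powerset.erase ∅ := by
    intro l hl
    obtain ⟨h0, hmono, hbd, hsurj⟩ := mem_LF.1 hl
    rw [Finset.mem_erase, Finset.mem_powerset]
    constructor
    · obtain ⟨v, hv, hvk⟩ := hsurj k hk le_rfl
      exact Finset.ne_empty_of_mem (Finset.mem_filter.2 ⟨hv, hvk⟩)
    · intro v hv
      rw [Finset.mem_filter] at hv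
      rw [lv, Finset.mem_filter]
      refine ⟨hv.1, fun w hw hC => ?_⟩
      have h1 := hmono v hv.1 w hw hC
      have h2 := (hbd w hw).2
      omega
  rw [Finset.card_eq_sum_card_fiberwise hfib]
  refine Finset.sum_congr rfl fun B hB => ?_
  rw [Finset.mem_erase, Finset.mem_powerset] at hB
  obtain ⟨hBne', hBlv⟩ := hB
  have hBs : B ⊆ s := hBlv.trans (Finset.filter_subset _ _)
  have hBne : B.Nonempty := Finset.nonempty_iff_ne_empty.2 hBne'
  refine Finset.card_nbij' (fun l => fun v => if v ∈ B then 0 else l v)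
    (fun l => fun v => if v ∈ B then (⟨k, by omega⟩ : Fin (Fintype.card V + 1)) else l v)
    ?_ ?_ ?_ ?_
  · -- forward membership
    intro l hl
    rw [Finset.mem_coe, Finset.mem_filter] at hl
    obtain ⟨hl, hfibB⟩ := hl
    obtain ⟨h0, hmono, hbd, hsurj⟩ := mem_LF.1 hl
    have hB_iff : ∀ v, v ∈ B ↔ (v ∈ s ∧ (l v : ℕ) = k) := by
      intro v
      rw [← hfibB, Finset.mem_filter]
    rw [Finset.mem_coe, mem_LF]
    refine ⟨?_, ?_, ?_, ?_⟩
    · intro v hv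
      beta_reduce
      rw [Finset.mem_sdiff] at hv
      push_neg at hv
      by_cases hvB : v ∈ B
      · simp [hvB]
      · have hvs : v ∉ s := fun hvs => hvB (by tauto)
        simpa [hvB] using h0 v hvs
    · intro v hv w hw hC
      beta_reduce
      rw [Finset.mem_sdiff] at hv hw
      rw [if_neg hv.2, if_neg hw.2]
      exact hmono v hv.1 w hw.1 hC
    · intro v hv
      beta_reduce
      rw [Finset.mem_sdiff] at hv
      rw [if_neg hv.2]
      have h1 := (hbd v hv.1).1
      have h2 := (hbd v hv.1).2
      have h3 : (l v : ℕ) ≠ k := fun h => hv.2 ((hB_iff v).2 ⟨hv.1, h⟩)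
      exact ⟨h1, by omega⟩
    · intro i hi1 hi2
      obtain ⟨v, hv, hvi⟩ := hsurj i hi1 (by omega)
      have hvB : v ∉ B := by
        intro hvB
        have := ((hB_iff v).1 hvB).2
        omega
      exact ⟨v, Finset.mem_sdiff.2 ⟨hv, hvB⟩, by beta_reduce; rw [if_neg hvB]; exact hvi⟩
  · -- backward membership
    intro l hl
    obtain ⟨h0, hmono, hbd, hsurj⟩ := mem_LF.1 hl
    rw [Finset.mem_coe, Finset.mem_filter]
    constructor
    · rw [mem_LF]
      refine ⟨?_, ?_, ?_, ?_⟩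
      · intro v hv
        beta_reduce
        have hvB : v ∉ B := fun h => hv (hBs h)
        have hvs : v ∉ s \ B := fun h => hv (Finset.mem_sdiff.1 h).1
        rw [if_neg hvB]
        exact h0 v hvs
      · intro v hv w hw hC
        beta_reduce
        by_cases hvB : v ∈ B
        · exfalso
          have := hBlv hvB
          rw [lv, Finset.mem_filter] at this
          exact this.2 w hw hC
        · by_cases hwB : w ∈ B
          · rw [if_neg hvB, if_pos hwB]
            have hbv := (hbd v (Finset.mem_sdiff.2 ⟨hv, hvB⟩)).2
            show (l v : ℕ) < k
            omega
          · rw [if_neg hvB, if_neg hwB]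
            exact hmono v (Finset.mem_sdiff.2 ⟨hv, hvB⟩) w (Finset.mem_sdiff.2 ⟨hw, hwB⟩) hC
      · intro v hv
        beta_reduce
        by_cases hvB : v ∈ B
        · rw [if_pos hvB]
          exact ⟨hk, le_rfl⟩
        · rw [if_neg hvB]
          have := hbd v (Finset.mem_sdiff.2 ⟨hv, hvB⟩)
          omega
      · intro i hi1 hi2
        by_cases hik : i = k
        · obtain ⟨v, hv⟩ := hBne
          exact ⟨v, hBs hv, by simp [hv, hik]⟩
        · obtain ⟨v, hv, hvi⟩ := hsurj i hi1 (by omega)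
          rw [Finset.mem_sdiff] at hv
          exact ⟨v, hv.1, by beta_reduce; rw [if_neg hv.2]; exact hvi⟩
    · ext v
      rw [Finset.mem_filter]
      constructor
      · rintro ⟨hv, hval⟩
        beta_reduce at hval
        by_contra hvB
        rw [if_neg hvB] at hval
        have := (hbd v (Finset.mem_sdiff.2 ⟨hv, hvB⟩)).2
        omega
      · intro hvB
        refine ⟨hBs hvB, ?_⟩
        beta_reduce
        rw [if_pos hvB]
  · -- left inverse
    intro l hl
    rw [Finset.mem_coe, Finset.mem_filter] at hl
    obtain ⟨hl, hfibB⟩ := hl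
    funext v
    beta_reduce
    by_cases hvB : v ∈ B
    · rw [if_pos hvB]
      have hmem : v ∈ s.filter fun v => (l v : ℕ) = k := hfibB ▸ hvB
      rw [Finset.mem_filter] at hmem
      exact Fin.ext hmem.2.symm
    · rw [if_neg hvB, if_neg hvB]
  · -- right inverse
    intro l hl
    obtain ⟨h0, hmono, hbd, hsurj⟩ := mem_LF.1 hl
    funext v
    beta_reduce
    by_cases hvB : v ∈ B
    · rw [if_pos hvB]
      have hvs : v ∉ s \ B := fun h => (Finset.mem_sdiff.1 h).2 hvB
      exact (Fin.ext (h0 v hvs)).symm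
    · rw [if_neg hvB, if_neg hvB]

lemma sign_split {a b c : ℕ} (h : a + b = c) : (-1 : ℤ) ^ a = (-1) ^ c * (-1) ^ b := by
  have h1 : (-1 : ℤ) ^ c = (-1) ^ a * (-1) ^ b := by rw [← pow_add, h]
  have h2 : Even (b + b) := ⟨b, rfl⟩
  rw [h1, mul_assoc, ← pow_add, h2.neg_one_pow, mul_one]

lemma LF_sum (C : V → V → Prop) (ρ : V → ℕ) (hρ : ∀ u v, C u v → ρ u < ρ v)
    (s : Finset V) :
    ∑ k ∈ Finset.range (s.card + 1), (-1 : ℤ) ^ k * (LF C s k).card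
      = (-1) ^ s.card := by
  induction s using Finset.strongInduction with
  | _ s IH =>
    rcases s.eq_empty_or_nonempty with rfl | hs
    · simp [LF_empty_zero]
    · have hlv : (lv C s).Nonempty := by
        obtain ⟨v, hv, hmax⟩ := Finset.exists_max_image s ρ hs
        refine ⟨v, ?_⟩
        rw [lv, Finset.mem_filter]
        refine ⟨hv, fun w hw hC => ?_⟩
        have := hρ v w hC
        have := hmax w hw
        omega
      have hcard1 : 1 ≤ s.card := Finset.Nonempty.card_pos hs
      rw [Finset.sum_range_succ']
      have h0 : (-1 : ℤ) ^ 0 * ((LF C s 0).card : ℤ) = 0 := by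
        simp [LF_zero hs]
      rw [h0, add_zero]
      have hstep : ∀ j ∈ Finset.range s.card,
          (-1 : ℤ) ^ (j + 1) * ((LF C s (j + 1)).card : ℤ)
            = ∑ B ∈ (lv C s).powerset.erase ∅,
                (-1 : ℤ) ^ (j + 1) * ((LF C (s \ B) j).card : ℤ) := by
        intro j hj
        rw [Finset.mem_range] at hj
        have hj' : j + 1 ≤ Fintype.card V := by
          have : s.card ≤ Fintype.card V := Finset.card_le_univ s
          omega
        rw [LF_card_rec C s (j + 1) (by omega) hj']
        push_cast
        rw [Finset.mul_sum]
      rw [Finset.sum_congr rfl hstep, Finset.sum_comm]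
      have hin : ∀ B ∈ (lv C s).powerset.erase ∅,
          ∑ j ∈ Finset.range s.card, (-1 : ℤ) ^ (j + 1) * ((LF C (s \ B) j).card : ℤ)
            = -(-1 : ℤ) ^ (s \ B).card := by
        intro B hB
        rw [Finset.mem_erase, Finset.mem_powerset] at hB
        have hBs : B ⊆ s := hB.2.trans (Finset.filter_subset _ _)
        have hBnon : B.Nonempty := Finset.nonempty_iff_ne_empty.2 hB.1
        have hBpos : 1 ≤ B.card := Finset.Nonempty.card_pos hBnon
        have hBcard : (s \ B).card + B.card = s.card := by
          rw [Finset.card_sdiff_of_subset hBs]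
          have := Finset.card_le_card hBs
          omega
        have hsub : Finset.range ((s \ B).card + 1) ⊆ Finset.range s.card := by
          intro x hx
          rw [Finset.mem_range] at hx ⊢
          omega
        have htrunc : ∑ j ∈ Finset.range s.card,
            (-1 : ℤ) ^ (j + 1) * ((LF C (s \ B) j).card : ℤ)
              = ∑ j ∈ Finset.range ((s \ B).card + 1),
                  (-1 : ℤ) ^ (j + 1) * ((LF C (s \ B) j).card : ℤ) := by
          refine (Finset.sum_subset hsub ?_).symm
          intro x hx hx'
          rw [Finset.mem_range, not_lt] at hx'
          rw [LF_eq_empty_of_gt (by omega)]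
          simp
        rw [htrunc]
        have hIH := IH (s \ B) (Finset.sdiff_ssubset hBs hBnon)
        calc ∑ j ∈ Finset.range ((s \ B).card + 1),
                (-1 : ℤ) ^ (j + 1) * ((LF C (s \ B) j).card : ℤ)
            = ∑ j ∈ Finset.range ((s \ B).card + 1),
                -((-1 : ℤ) ^ j * ((LF C (s \ B) j).card : ℤ)) := by
              refine Finset.sum_congr rfl fun j _ => ?_
              rw [pow_succ]
              ring
          _ = -∑ j ∈ Finset.range ((s \ B).card + 1),
                (-1 : ℤ) ^ j * ((LF C (s \ B) j).card : ℤ) := by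
              rw [Finset.sum_neg_distrib]
          _ = -(-1 : ℤ) ^ (s \ B).card := by rw [hIH]
      rw [Finset.sum_congr rfl hin]
      have hsgn : ∀ B ∈ (lv C s).powerset.erase ∅,
          -(-1 : ℤ) ^ (s \ B).card = -((-1 : ℤ) ^ s.card * (-1) ^ B.card) := by
        intro B hB
        rw [Finset.mem_erase, Finset.mem_powerset] at hB
        have hBs : B ⊆ s := hB.2.trans (Finset.filter_subset _ _)
        have hBcard : (s \ B).card + B.card = s.card := by
          rw [Finset.card_sdiff_of_subset hBs]
          have := Finset.card_le_card hBs
          omega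
        rw [sign_split hBcard]
      rw [Finset.sum_congr rfl hsgn]
      have hpow : ∑ B ∈ (lv C s).powerset.erase ∅, ((-1 : ℤ) ^ B.card) = -1 := by
        have hins : (lv C s).powerset = insert ∅ ((lv C s).powerset.erase ∅) :=
          (Finset.insert_erase (Finset.empty_mem_powerset _)).symm
        have := Finset.sum_powerset_neg_one_pow_card (x := lv C s)
        rw [hins, Finset.sum_insert (Finset.notMem_erase _ _)] at this
        rw [if_neg (Finset.nonempty_iff_ne_empty.1 hlv)] at this
        simp only [Finset.card_empty, pow_zero] at this
        omega
      calc ∑ B ∈ (lv C s).powerset.erase ∅, -((-1 : ℤ) ^ s.card * (-1) ^ B.card)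
          = -((-1 : ℤ) ^ s.card * ∑ B ∈ (lv C s).powerset.erase ∅, ((-1 : ℤ) ^ B.card)) := by
            rw [Finset.mul_sum, Finset.sum_neg_distrib]
        _ = (-1 : ℤ) ^ s.card := by rw [hpow]; ring

end S8

/-- Let `T` be a finite rooted tree. For `k ≥ 1`, a surjective level
function of degree `k` is a function `l : V → {1,…,k}` with `l(root) = 1`, `l(v) < l(w)`
whenever `w` is a child of `v` (i.e. `w` is adjacent to `v` and lies one step further from
the root), and `l` surjective onto `{1,…,k}`. Then
`Σ_{k ≥ 1} Σ_l (−1)^{k−1} = (−1)^{|E(T)|}` (the sum is finite since `k ≤ |V|`). -/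
theorem statement8 (V : Type) [Fintype V] [DecidableEq V]
    (G : SimpleGraph V) [DecidableRel G.Adj] (hT : G.IsTree) (root : V) :
    ∑ k ∈ Finset.Icc 1 (Fintype.card V), (-1 : ℤ) ^ (k - 1) *
        ({l : V → ℕ |
            l root = 1 ∧
            (∀ v w : V, G.Adj v w → G.dist root w = G.dist root v + 1 → l v < l w) ∧
            (∀ v : V, 1 ≤ l v ∧ l v ≤ k) ∧
            (∀ i : ℕ, 1 ≤ i → i ≤ k → ∃ v : V, l v = i)}.ncard : ℤ)
      = (-1) ^ G.edgeFinset.card := by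
  classical
  set C : V → V → Prop := fun v w => G.Adj v w ∧ G.dist root w = G.dist root v + 1 with hC
  have hρ : ∀ u v, C u v → G.dist root u < G.dist root v := by
    intro u v h
    rw [h.2]
    omega
  -- every non-root vertex has a parent
  have hpar : ∀ v : V, v ≠ root → ∃ u, C u v := by
    intro v hv
    have hreach : G.Reachable root v := hT.isConnected.preconnected root v
    have hdpos : 0 < G.dist root v := hT.isConnected.pos_dist_of_ne (Ne.symm hv)
    obtain ⟨p, hp⟩ := hreach.exists_walk_length_eq_dist
    have hrev : p.reverse.length = G.dist root v := by
      rw [SimpleGraph.Walk.length_reverse, hp]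
    cases hq : p.reverse with
    | nil =>
      rw [hq] at hrev
      simp only [SimpleGraph.Walk.length_nil] at hrev
      omega
    | cons h q =>
      rename_i u
      refine ⟨u, h.symm, ?_⟩
      have hlen : q.length + 1 = G.dist root v := by
        rw [hq] at hrev
        simpa using hrev
      have hle1 : G.dist root u ≤ q.reverse.length := SimpleGraph.dist_le q.reverse
      rw [SimpleGraph.Walk.length_reverse] at hle1
      have hle2 : G.dist root v ≤ G.dist root u + 1 := by
        obtain ⟨w, hw⟩ := (hT.isConnected.preconnected root u).exists_walk_length_eq_dist
        have := SimpleGraph.dist_le (w.concat h.symm)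
        rwa [SimpleGraph.Walk.length_concat, hw] at this
      omega
  -- root is forced to have level 1
  have hroot1 : ∀ k : ℕ, 1 ≤ k → ∀ l : V → Fin (Fintype.card V + 1),
      l ∈ S8.LF C Finset.univ k → (l root : ℕ) = 1 := by
    intro k hk l hl
    obtain ⟨-, hmono, hbd, hsurj⟩ := S8.mem_LF.1 hl
    obtain ⟨v, -, hv1⟩ := hsurj 1 le_rfl hk
    rcases eq_or_ne v root with rfl | hne
    · exact hv1
    · obtain ⟨u, hu⟩ := hpar v hne
      have h1 := hmono u (Finset.mem_univ u) v (Finset.mem_univ v) hu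
      have h2 := (hbd u (Finset.mem_univ u)).1
      omega
  -- per-k identification of the two counts
  have hk_eq : ∀ k ∈ Finset.Icc 1 (Fintype.card V),
      ({l : V → ℕ |
          l root = 1 ∧
          (∀ v w : V, G.Adj v w → G.dist root w = G.dist root v + 1 → l v < l w) ∧
          (∀ v : V, 1 ≤ l v ∧ l v ≤ k) ∧
          (∀ i : ℕ, 1 ≤ i → i ≤ k → ∃ v : V, l v = i)}.ncard : ℤ)
        = ((S8.LF C Finset.univ k).card : ℤ) := by
    intro k hk
    rw [Finset.mem_Icc] at hk
    have hinj : Function.Injective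
        (fun (l : V → Fin (Fintype.card V + 1)) (v : V) => (l v : ℕ)) := by
      intro l l' h
      funext v
      exact Fin.ext (congrFun h v)
    have himg : {l : V → ℕ |
          l root = 1 ∧
          (∀ v w : V, G.Adj v w → G.dist root w = G.dist root v + 1 → l v < l w) ∧
          (∀ v : V, 1 ≤ l v ∧ l v ≤ k) ∧
          (∀ i : ℕ, 1 ≤ i → i ≤ k → ∃ v : V, l v = i)}
        = ↑((S8.LF C Finset.univ k).image
            (fun (l : V → Fin (Fintype.card V + 1)) (v : V) => (l v : ℕ))) := by
      ext g
      simp only [Finset.coe_image, Set.mem_image, Finset.mem_coe, Set.mem_setOf_eq]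
      constructor
      · rintro ⟨h1, h2, h3, h4⟩
        refine ⟨fun v => ⟨g v, ?_⟩, ?_, rfl⟩
        · have := (h3 v).2
          omega
        · rw [S8.mem_LF]
          refine ⟨fun v hv => absurd (Finset.mem_univ v) hv, ?_, ?_, ?_⟩
          · intro v _ w _ hvw
            exact h2 v w hvw.1 hvw.2
          · intro v _
            exact h3 v
          · intro i hi1 hi2
            obtain ⟨v, hv⟩ := h4 i hi1 hi2
            exact ⟨v, Finset.mem_univ v, hv⟩
      · rintro ⟨l, hl, rfl⟩
        obtain ⟨-, hmono, hbd, hsurj⟩ := S8.mem_LF.1 hl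
        refine ⟨hroot1 k hk.1 l hl, ?_, ?_, ?_⟩
        · intro v w hadj hdist
          exact hmono v (Finset.mem_univ v) w (Finset.mem_univ w) ⟨hadj, hdist⟩
        · intro v
          exact hbd v (Finset.mem_univ v)
        · intro i hi1 hi2
          obtain ⟨v, -, hv⟩ := hsurj i hi1 hi2
          exact ⟨v, hv⟩
    rw [himg, Set.ncard_coe_finset, Finset.card_image_of_injective _ hinj]
  have hk_eq' :
      ∑ k ∈ Finset.Icc 1 (Fintype.card V), (-1 : ℤ) ^ (k - 1) *
        ({l : V → ℕ |
            l root = 1 ∧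
            (∀ v w : V, G.Adj v w → G.dist root w = G.dist root v + 1 → l v < l w) ∧
            (∀ v : V, 1 ≤ l v ∧ l v ≤ k) ∧
            (∀ i : ℕ, 1 ≤ i → i ≤ k → ∃ v : V, l v = i)}.ncard : ℤ)
      = ∑ k ∈ Finset.Icc 1 (Fintype.card V), (-1 : ℤ) ^ (k - 1) * ((S8.LF C Finset.univ k).card : ℤ) :=
    Finset.sum_congr rfl fun k hk => by rw [hk_eq k hk]
  rw [hk_eq']
  -- use the main lemma
  have hmain := S8.LF_sum C (G.dist root) hρ Finset.univ
  rw [Finset.card_univ] at hmain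
  have hVne : Finset.univ.Nonempty := ⟨root, Finset.mem_univ root⟩
  have hn1 : 1 ≤ Fintype.card V := Fintype.card_pos_iff.2 ⟨root⟩
  have hsplit : Finset.range (Fintype.card V + 1) = insert 0 (Finset.Icc 1 (Fintype.card V)) := by
    ext x
    simp only [Finset.mem_range, Finset.mem_insert, Finset.mem_Icc, Nat.lt_succ_iff]
    constructor
    · intro h
      rcases Nat.eq_zero_or_pos x with h0 | h1
      · exact Or.inl h0
      · exact Or.inr ⟨h1, h⟩
    · rintro (rfl | ⟨-, h⟩)
      · exact Nat.zero_le _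
      · exact h
  rw [hsplit, Finset.sum_insert (by simp)] at hmain
  have h00 : (-1 : ℤ) ^ 0 * ((S8.LF C Finset.univ 0).card : ℤ) = 0 := by
    rw [S8.LF_zero hVne]
    simp
  rw [h00, zero_add] at hmain
  have hlhs : ∑ k ∈ Finset.Icc 1 (Fintype.card V),
      (-1 : ℤ) ^ (k - 1) * ((S8.LF C Finset.univ k).card : ℤ)
        = -∑ k ∈ Finset.Icc 1 (Fintype.card V),
            (-1 : ℤ) ^ k * ((S8.LF C Finset.univ k).card : ℤ) := by
    rw [← Finset.sum_neg_distrib]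
    refine Finset.sum_congr rfl fun k hk => ?_
    rw [Finset.mem_Icc] at hk
    have hk1 : k - 1 + 1 = k := Nat.sub_add_cancel hk.1
    calc (-1 : ℤ) ^ (k - 1) * ((S8.LF C Finset.univ k).card : ℤ)
        = -((-1 : ℤ) ^ (k - 1) * (-1) * ((S8.LF C Finset.univ k).card : ℤ)) := by ring
      _ = -((-1 : ℤ) ^ (k - 1 + 1) * ((S8.LF C Finset.univ k).card : ℤ)) := by
          rw [pow_succ]
      _ = -((-1 : ℤ) ^ k * ((S8.LF C Finset.univ k).card : ℤ)) := by rw [hk1]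
  rw [hlhs, hmain]
  have hedge : G.edgeFinset.card + 1 = Fintype.card V := hT.card_edgeFinset
  have : Fintype.card V = G.edgeFinset.card + 1 := hedge.symm
  rw [this, pow_succ]
  ring
end

section
/- For every g ≥ 0, n ≥ 1 and m ≥ 0, the set SRT^{(b,c,a)}_{g,n,m;∘} of isomorphism classes of admissible complete balanced stable rooted trees of genus g with n regular legs, m frozen legs, and an arbitrary finite number of extra legs, is finite. -/
open scoped Classical

noncomputable section

/-- A combinatorial encoding of a stable rooted tree with `n` labelled regular legs,
`m` frozen legs attached to the root, a genus attached to every vertex, and a number of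
unlabelled extra legs attached to every vertex.  The vertices are `0, …, k−1`; the root is
the vertex `0`, and every non-root vertex `i` has a mother `parent i` with a smaller index
(so the underlying graph is a tree rooted at `0`). -/
structure SRTree (n m : ℕ) where
  /-- number of vertices -/
  k : ℕ
  kpos : 0 < k
  /-- the mother of each vertex (the root is a fixed point) -/
  parent : Fin k → Fin k
  parent_lt : ∀ i : Fin k, 0 < (i : ℕ) → (parent i : ℕ) < (i : ℕ)
  parent_root : ∀ i : Fin k, (i : ℕ) = 0 → parent i = i
  /-- the genus of each vertex -/
  genus : Fin k → ℕ
  /-- the vertex to which each regular leg is attached -/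
  rleg : Fin n → Fin k
  /-- the number of extra legs attached to each vertex -/
  eleg : Fin k → ℕ

namespace SRTree

variable {n m : ℕ}

/-- The root. -/
def root (T : SRTree n m) : Fin T.k := ⟨0, T.kpos⟩

/-- The canonical level function: the root has level 1, and each vertex has level one more
than its mother. -/
def level (T : SRTree n m) (v : Fin T.k) : ℕ :=
  if h : (v : ℕ) = 0 then 1 else level T (T.parent v) + 1
termination_by (v : ℕ)
decreasing_by exact T.parent_lt v (Nat.pos_of_ne_zero h)

/-- The degree of the tree: the maximal level of a vertex. -/
def deg (T : SRTree n m) : ℕ := Finset.univ.sup (T.level)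

/-- Number of direct descendants (children) of a vertex. -/
def nChild (T : SRTree n m) (v : Fin T.k) : ℕ :=
  (Finset.univ.filter fun w : Fin T.k => (w : ℕ) ≠ 0 ∧ T.parent w = v).card

/-- Number of regular legs attached to a vertex. -/
def nRleg (T : SRTree n m) (v : Fin T.k) : ℕ :=
  (Finset.univ.filter fun j : Fin n => T.rleg j = v).card

/-- The number `n(v)` of half-edges incident to `v`, not counting extra legs: edges to the
children, the edge to the mother (for a non-root vertex), the regular legs, and the `m`
frozen legs (at the root). -/
def valNE (T : SRTree n m) (v : Fin T.k) : ℕ :=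
  T.nChild v + (if (v : ℕ) = 0 then m else 1) + T.nRleg v

/-- Stability: `2 g(v) − 2 + n(v) > 0` at every vertex, counting all incident half-edges
(including the extra legs). -/
def Stable (T : SRTree n m) : Prop :=
  ∀ v : Fin T.k, 2 < 2 * T.genus v + (T.valNE v + T.eleg v)

/-- The total genus of the tree is `g`. -/
def TotalGenus (T : SRTree n m) (g : ℕ) : Prop :=
  (∑ v : Fin T.k, T.genus v) = g

/-- A vertex is potentially unstable if it violates stability after the extra legs are
forgotten. -/
def PU (T : SRTree n m) (v : Fin T.k) : Prop :=
  2 * T.genus v + T.valNE v ≤ 2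

/-- Balanced: no extra legs at the root, and at least one extra leg at every other
vertex. -/
def Balanced (T : SRTree n m) : Prop :=
  T.eleg T.root = 0 ∧ ∀ v : Fin T.k, (v : ℕ) ≠ 0 → 1 ≤ T.eleg v

/-- `w` is a descendant of `v` (possibly `w = v`). -/
def Desc (T : SRTree n m) (v w : Fin T.k) : Prop :=
  ∃ j : ℕ, T.parent^[j] w = v

/-- Completeness of a balanced tree: (a) every vertex has a descendant of level `deg T`;
(b) every regular leg is attached at level `deg T`; (c) every vertex of level `deg T`
carries a regular leg; (d) every level contains a vertex that is not potentially
unstable. -/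
def Complete (T : SRTree n m) : Prop :=
  (∀ v : Fin T.k, ∃ w : Fin T.k, T.Desc v w ∧ T.level w = T.deg) ∧
  (∀ j : Fin n, T.level (T.rleg j) = T.deg) ∧
  (∀ v : Fin T.k, T.level v = T.deg → ∃ j : Fin n, T.rleg j = v) ∧
  (∀ K : ℕ, 1 ≤ K → K ≤ T.deg → ∃ v : Fin T.k, T.level v = K ∧ ¬ T.PU v)

/-- Admissibility: for every `1 ≤ K < deg T`,
`Σ_{h ∈ H^e_+(T), l_T(h) = K} q(h) ≤ 2 g_K(T) − 2 + m`.  The half-edges `h ∈ H^e_+(T)` of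
level `K` correspond to the non-root vertices `w` of level `K + 1` (the half-edge being
attached to the mother of `w`), and `q(h) = eleg w − 1`. -/
def Admissible (T : SRTree n m) : Prop :=
  ∀ K : ℕ, 1 ≤ K → K < T.deg →
    (∑ w ∈ Finset.univ.filter
        (fun w : Fin T.k => (w : ℕ) ≠ 0 ∧ T.level w = K + 1), ((T.eleg w : ℤ) - 1))
      ≤ 2 * (∑ v ∈ Finset.univ.filter (fun v : Fin T.k => T.level v ≤ K),
          (T.genus v : ℤ)) - 2 + (m : ℤ)

/-- Isomorphism of encoded stable rooted trees: a bijection of the vertices preserving the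
root, the mother map, the genera, the extra-leg counts, and the attachment of the labelled
regular legs. -/
def Iso (T₁ T₂ : SRTree n m) : Prop :=
  ∃ e : Fin T₁.k ≃ Fin T₂.k,
    e T₁.root = T₂.root ∧
    (∀ v, T₂.parent (e v) = e (T₁.parent v)) ∧
    (∀ v, T₂.genus (e v) = T₁.genus v) ∧
    (∀ v, T₂.eleg (e v) = T₁.eleg v) ∧
    (∀ j : Fin n, T₂.rleg j = e (T₁.rleg j))


lemma one_le_level (T : SRTree n m) (v : Fin T.k) : 1 ≤ T.level v := by
  rw [level]; split <;> omega

lemma level_root (T : SRTree n m) : T.level T.root = 1 := by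
  rw [level]; simp [root]

lemma level_of_ne_root (T : SRTree n m) {v : Fin T.k} (h : (v : ℕ) ≠ 0) :
    T.level v = T.level (T.parent v) + 1 := by
  conv_lhs => rw [level]
  simp [h]

lemma level_eq_one_iff (T : SRTree n m) {v : Fin T.k} : T.level v = 1 ↔ (v : ℕ) = 0 := by
  constructor
  · intro h
    by_contra hv
    have := T.level_of_ne_root hv
    have := T.one_le_level (T.parent v)
    omega
  · intro h; rw [level]; simp [h]

lemma level_iterate (T : SRTree n m) (j : ℕ) (v : Fin T.k) :
    T.level (T.parent^[j] v) = max (T.level v - j) 1 := by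
  induction j generalizing v with
  | zero => simp; have := T.one_le_level v; omega
  | succ j ih =>
    rw [Function.iterate_succ_apply, ih]
    by_cases hv : (v : ℕ) = 0
    · rw [T.parent_root v hv]
      have h1 : T.level v = 1 := (T.level_eq_one_iff).2 hv
      omega
    · have := T.level_of_ne_root hv
      omega

lemma anc_unique (T : SRTree n m) {v v' w : Fin T.k} {i j : ℕ}
    (hi : T.parent^[i] w = v) (hj : T.parent^[j] w = v')
    (hl : T.level v = T.level v') : v = v' := by
  have h1 := T.level_iterate i w
  have h2 := T.level_iterate j w
  rw [hi] at h1; rw [hj] at h2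
  by_cases hone : T.level v = 1
  · have e1 : (v : ℕ) = 0 := (T.level_eq_one_iff).1 hone
    have e2 : (v' : ℕ) = 0 := (T.level_eq_one_iff).1 (hl ▸ hone)
    exact Fin.ext (e1.trans e2.symm)
  · have : i = j := by omega
    rw [← hi, ← hj, this]

lemma level_le_deg (T : SRTree n m) (v : Fin T.k) : T.level v ≤ T.deg :=
  Finset.le_sup (Finset.mem_univ v)

lemma one_le_deg (T : SRTree n m) : 1 ≤ T.deg :=
  le_trans (T.one_le_level T.root) (T.level_le_deg T.root)

lemma sum_nRleg (T : SRTree n m) : ∑ v : Fin T.k, T.nRleg v = n := by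
  have := Finset.card_eq_sum_card_fiberwise
    (f := T.rleg) (s := Finset.univ) (t := Finset.univ) (fun x _ => Finset.mem_univ _)
  simpa [nRleg] using this.symm

lemma card_nonroot (T : SRTree n m) :
    (Finset.univ.filter fun w : Fin T.k => (w : ℕ) ≠ 0).card = T.k - 1 := by
  have h : (Finset.univ.filter fun w : Fin T.k => ¬ ((w : ℕ) ≠ 0)).card = 1 := by
    rw [Finset.card_eq_one]
    refine ⟨T.root, ?_⟩
    ext w
    simp [root, Fin.ext_iff]
  have h2 := Finset.card_filter_add_card_filter_not
    (s := (Finset.univ : Finset (Fin T.k))) (p := fun w : Fin T.k => (w : ℕ) ≠ 0)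
  have hk := T.kpos
  simp only [Finset.card_univ, Fintype.card_fin] at h2
  omega

lemma sum_nChild (T : SRTree n m) : ∑ v : Fin T.k, T.nChild v = T.k - 1 := by
  have := Finset.card_eq_sum_card_fiberwise
    (f := T.parent) (s := Finset.univ.filter fun w : Fin T.k => (w : ℕ) ≠ 0)
    (t := Finset.univ) (fun x _ => Finset.mem_univ _)
  rw [T.card_nonroot] at this
  rw [this]
  refine Finset.sum_congr rfl fun v _ => ?_
  rw [nChild]
  congr 1
  rw [Finset.filter_filter]


lemma leaf_level (T : SRTree n m) (hC : T.Complete) {v : Fin T.k}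
    (hv : T.nChild v = 0) : T.level v = T.deg := by
  obtain ⟨w, ⟨i, hi⟩, hw⟩ := hC.1 v
  have hfilt : ∀ z : Fin T.k, (z : ℕ) ≠ 0 → T.parent z ≠ v := by
    intro z hz hpz
    have hmem : z ∈ Finset.univ.filter
        (fun w : Fin T.k => (w : ℕ) ≠ 0 ∧ T.parent w = v) := by simp [hz, hpz]
    have := Finset.card_pos.2 ⟨z, hmem⟩
    rw [nChild] at hv; omega
  cases i with
  | zero => simp at hi; rw [← hi, hw]
  | succ i =>
    set u := T.parent^[i] w with hu
    have hpu : T.parent u = v := by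
      rw [← hi, Function.iterate_succ_apply']
    by_cases hu0 : (u : ℕ) = 0
    · have hvu : v = u := by rw [← hpu, T.parent_root u hu0]
      have hv0 : (v : ℕ) = 0 := by rw [hvu]; exact hu0
      by_cases hk : T.k = 1
      · have hwv : w = v := by
          apply Fin.ext
          have h1 := w.isLt
          have h2 := v.isLt
          omega
        rw [← hwv, hw]
      · have hk2 : 2 ≤ T.k := by have := T.kpos; omega
        set z : Fin T.k := ⟨1, by omega⟩ with hz
        have hzlt : (T.parent z : ℕ) < 1 := T.parent_lt z (by simp [hz])
        have : T.parent z = v := Fin.ext (by omega)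
        exact absurd this (hfilt z (by simp [hz]))
    · exact absurd hpu (hfilt u hu0)

lemma card_leaf_le (T : SRTree n m) (hC : T.Complete) (hn : 1 ≤ n) :
    (Finset.univ.filter fun v : Fin T.k => T.nChild v = 0).card ≤ n := by
  have := Finset.card_le_card_of_injOn
    (f := fun v : Fin T.k =>
      if h : ∃ j : Fin n, T.rleg j = v then h.choose else ⟨0, hn⟩)
    (s := Finset.univ.filter fun v : Fin T.k => T.nChild v = 0)
    (t := (Finset.univ : Finset (Fin n)))
    (fun v _ => Finset.mem_univ _) ?_
  · simpa using this
  · intro v hv v' hv' heq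
    simp only [Finset.mem_coe, Finset.mem_filter, Finset.mem_univ, true_and] at hv hv'
    dsimp only at heq
    have h1 : ∃ j : Fin n, T.rleg j = v := hC.2.2.1 v (T.leaf_level hC hv)
    have h2 : ∃ j : Fin n, T.rleg j = v' := hC.2.2.1 v' (T.leaf_level hC hv')
    rw [dif_pos h1, dif_pos h2] at heq
    rw [← h1.choose_spec, ← h2.choose_spec, heq]

lemma card_branch_le (T : SRTree n m) (hC : T.Complete) (hn : 1 ≤ n) :
    (Finset.univ.filter fun v : Fin T.k => 2 ≤ T.nChild v).card ≤ n := by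
  have hpt : ∀ v : Fin T.k,
      (if 1 ≤ T.nChild v then 1 else 0) + (if 2 ≤ T.nChild v then 1 else 0)
        ≤ T.nChild v := by
    intro v; split_ifs <;> omega
  have hsum := Finset.sum_le_sum (s := (Finset.univ : Finset (Fin T.k)))
    (fun v _ => hpt v)
  rw [Finset.sum_add_distrib, Finset.sum_boole, Finset.sum_boole, T.sum_nChild] at hsum
  have h1 : (Finset.univ.filter fun v : Fin T.k => ¬ (1 ≤ T.nChild v)).card
      = (Finset.univ.filter fun v : Fin T.k => T.nChild v = 0).card := by
    congr 1; ext v; simp [Nat.lt_one_iff]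
  have h2 := Finset.card_filter_add_card_filter_not
    (s := (Finset.univ : Finset (Fin T.k))) (p := fun v : Fin T.k => 1 ≤ T.nChild v)
  rw [h1] at h2
  simp only [Finset.card_univ, Fintype.card_fin] at h2
  have h3 := T.card_leaf_le hC hn
  have hk := T.kpos
  simp only [Nat.smul_one_eq_cast, Nat.cast_id] at hsum
  omega


lemma genus_le {g : ℕ} (T : SRTree n m) (hg : T.TotalGenus g) (v : Fin T.k) :
    T.genus v ≤ g := by
  rw [TotalGenus] at hg
  calc T.genus v ≤ ∑ w : Fin T.k, T.genus w :=
        Finset.single_le_sum (fun w _ => Nat.zero_le _) (Finset.mem_univ v)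
    _ = g := hg

lemma deg_le {g : ℕ} (T : SRTree n m) (hC : T.Complete) (hg : T.TotalGenus g)
    (hn : 1 ≤ n) : T.deg ≤ g + 2 * n + 1 := by
  classical
  set A := Finset.univ.filter fun v : Fin T.k => 1 ≤ T.genus v with hA
  set B := Finset.univ.filter fun v : Fin T.k => 1 ≤ T.nRleg v with hB
  set C := Finset.univ.filter fun v : Fin T.k => 2 ≤ T.nChild v with hCC
  set NP := Finset.univ.filter fun v : Fin T.k => ¬ T.PU v with hNP
  -- deg ≤ card NP
  have hdeg : T.deg ≤ NP.card := by
    have := Finset.card_le_card_of_injOn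
      (f := fun K : ℕ => if h : 1 ≤ K ∧ K ≤ T.deg
        then (hC.2.2.2 K h.1 h.2).choose else T.root)
      (s := Finset.Icc 1 T.deg) (t := NP) ?_ ?_
    · rwa [Nat.card_Icc, Nat.add_sub_cancel] at this
    · intro K hK
      simp only [Finset.mem_coe, Finset.mem_Icc] at hK
      dsimp only
      rw [dif_pos hK]
      simp only [Finset.mem_coe, hNP, Finset.mem_filter, Finset.mem_univ, true_and]
      exact (hC.2.2.2 K hK.1 hK.2).choose_spec.2
    · intro K hK K' hK' heq
      simp only [Finset.mem_coe, Finset.mem_Icc] at hK hK'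
      dsimp only at heq
      rw [dif_pos hK, dif_pos hK'] at heq
      have e1 := (hC.2.2.2 K hK.1 hK.2).choose_spec.1
      have e2 := (hC.2.2.2 K' hK'.1 hK'.2).choose_spec.1
      rw [← e1, ← e2, heq]
  -- NP ⊆ A ∪ B ∪ C ∪ {root}
  have hsub : NP ⊆ A ∪ B ∪ C ∪ {T.root} := by
    intro v hv
    simp only [hNP, Finset.mem_filter, Finset.mem_univ, true_and] at hv
    simp only [PU, valNE] at hv
    simp only [Finset.mem_union, hA, hB, hCC, Finset.mem_filter, Finset.mem_univ,
      true_and, Finset.mem_singleton]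
    by_cases h1 : 1 ≤ T.genus v
    · tauto
    · by_cases h0 : (v : ℕ) = 0
      · right; exact Fin.ext (by simp [root, h0])
      · rw [if_neg h0] at hv
        by_cases h2 : 1 ≤ T.nRleg v
        · tauto
        · left; right; omega
  -- card bounds
  have hcA : A.card ≤ g := by
    calc A.card = ∑ v ∈ A, 1 := (Finset.card_eq_sum_ones A)
      _ ≤ ∑ v ∈ A, T.genus v := Finset.sum_le_sum (fun v hv => by
          simp only [hA, Finset.mem_filter] at hv; exact hv.2)
      _ ≤ ∑ v : Fin T.k, T.genus v :=
          Finset.sum_le_sum_of_subset (Finset.filter_subset _ _)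
      _ = g := hg
  have hcB : B.card ≤ n := by
    calc B.card = ∑ v ∈ B, 1 := (Finset.card_eq_sum_ones B)
      _ ≤ ∑ v ∈ B, T.nRleg v := Finset.sum_le_sum (fun v hv => by
          simp only [hB, Finset.mem_filter] at hv; exact hv.2)
      _ ≤ ∑ v : Fin T.k, T.nRleg v :=
          Finset.sum_le_sum_of_subset (Finset.filter_subset _ _)
      _ = n := T.sum_nRleg
  have hcC : C.card ≤ n := T.card_branch_le hC hn
  have := Finset.card_le_card hsub
  have h4 := Finset.card_union_le (A ∪ B ∪ C) ({T.root} : Finset (Fin T.k))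
  have h5 := Finset.card_union_le (A ∪ B) C
  have h6 := Finset.card_union_le A B
  simp only [Finset.card_singleton] at h4
  omega

lemma k_le (T : SRTree n m) (hC : T.Complete) : T.k ≤ T.deg * n := by
  classical
  have := Finset.card_le_card_of_injOn
    (f := fun v : Fin T.k =>
      ((T.level v, (hC.2.2.1 (hC.1 v).choose (hC.1 v).choose_spec.2).choose) : ℕ × Fin n))
    (s := (Finset.univ : Finset (Fin T.k)))
    (t := Finset.Icc 1 T.deg ×ˢ (Finset.univ : Finset (Fin n))) ?_ ?_
  · rw [Finset.card_product, Nat.card_Icc, Nat.add_sub_cancel, Finset.card_univ,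
      Fintype.card_fin, Finset.card_univ, Fintype.card_fin] at this
    exact this
  · intro v _
    simp only [Finset.mem_coe, Finset.mem_product, Finset.mem_Icc, Finset.mem_univ, and_true]
    exact ⟨T.one_le_level v, T.level_le_deg v⟩
  · intro v _ v' _ heq
    dsimp only at heq
    rw [Prod.mk.injEq] at heq
    obtain ⟨hlev, hj⟩ := heq
    have s1 := (hC.2.2.1 (hC.1 v).choose (hC.1 v).choose_spec.2).choose_spec
    have s2 := (hC.2.2.1 (hC.1 v').choose (hC.1 v').choose_spec.2).choose_spec
    rw [hj, s2] at s1
    obtain ⟨i, hi⟩ := (hC.1 v).choose_spec.1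
    obtain ⟨i', hi'⟩ := (hC.1 v').choose_spec.1
    rw [← s1] at hi
    exact T.anc_unique hi hi' hlev

lemma eleg_le {g : ℕ} (T : SRTree n m) (hB : T.Balanced) (hAd : T.Admissible)
    (hg : T.TotalGenus g) (v : Fin T.k) : T.eleg v ≤ 2 * g + m := by
  by_cases h0 : (v : ℕ) = 0
  · have : v = T.root := Fin.ext (by simp [root, h0])
    rw [this, hB.1]
    omega
  · have h2 : 2 ≤ T.level v := by
      have := T.level_of_ne_root h0
      have := T.one_le_level (T.parent v)
      omega
    set K := T.level v - 1 with hK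
    have hK1 : 1 ≤ K := by omega
    have hK2 : K < T.deg := by
      have := T.level_le_deg v
      have := T.one_le_deg
      omega
    have hsum := hAd K hK1 hK2
    have hmem : v ∈ Finset.univ.filter
        (fun w : Fin T.k => (w : ℕ) ≠ 0 ∧ T.level w = K + 1) := by
      simp only [Finset.mem_filter, Finset.mem_univ, true_and]
      exact ⟨h0, by omega⟩
    have hsingle : (T.eleg v : ℤ) - 1 ≤ ∑ w ∈ Finset.univ.filter
        (fun w : Fin T.k => (w : ℕ) ≠ 0 ∧ T.level w = K + 1), ((T.eleg w : ℤ) - 1) := by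
      refine Finset.single_le_sum (f := fun w : Fin T.k => (T.eleg w : ℤ) - 1)
        (fun w hw => ?_) hmem
      simp only [Finset.mem_filter, Finset.mem_univ, true_and] at hw
      have := hB.2 w hw.1
      omega
    have hgsum : (∑ u ∈ Finset.univ.filter (fun u : Fin T.k => T.level u ≤ K),
        (T.genus u : ℤ)) ≤ (g : ℤ) := by
      calc (∑ u ∈ Finset.univ.filter (fun u : Fin T.k => T.level u ≤ K), (T.genus u : ℤ))
          ≤ ∑ u : Fin T.k, (T.genus u : ℤ) :=
            Finset.sum_le_sum_of_subset_of_nonneg (Finset.filter_subset _ _)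
              (fun u _ _ => Int.natCast_nonneg _)
        _ = (g : ℤ) := by rw [← Nat.cast_sum, hg]
    have := hsingle.trans hsum
    set S := (∑ u ∈ Finset.univ.filter (fun u : Fin T.k => T.level u ≤ K),
        (T.genus u : ℤ)) with hS
    omega

end SRTree

lemma finite_bounded_funs {k g : ℕ} : {f : Fin k → ℕ | ∀ v, f v ≤ g}.Finite := by
  have h : {f : Fin k → ℕ | ∀ v, f v ≤ g} = Set.pi Set.univ (fun _ => Set.Iic g) := by
    ext f; simp [Set.mem_pi, Pi.le_def]
  rw [h]
  exact Set.Finite.pi (fun _ => Set.finite_Iic g)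

def Enc (n : ℕ) := Σ k : ℕ, (Fin k → Fin k) × (Fin k → ℕ) × (Fin n → Fin k) × (Fin k → ℕ)

lemma finite_encoded (n N g B : ℕ) :
    {x : Enc n | x.1 ≤ N ∧ (∀ v, x.2.2.1 v ≤ g) ∧ (∀ v, x.2.2.2.2 v ≤ B)}.Finite := by
  apply Set.Finite.subset
    (Set.Finite.biUnion (Set.finite_Iic N) (fun k _ =>
      Set.Finite.image (fun y => (⟨k, y⟩ : Enc n))
        (Set.finite_univ.prod (finite_bounded_funs.prod
          (Set.finite_univ.prod finite_bounded_funs)))))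
  intro x hx
  obtain ⟨h1, h2, h3⟩ := hx
  refine Set.mem_biUnion h1 ?_
  exact ⟨x.2, ⟨Set.mem_univ _, h2, Set.mem_univ _, h3⟩, Sigma.eta x⟩

def encode {n m : ℕ} (T : SRTree n m) : Enc n :=
  ⟨T.k, T.parent, T.genus, T.rleg, T.eleg⟩

lemma encode_injective {n m : ℕ} : Function.Injective (@encode n m) := by
  rintro ⟨k1, pos1, par1, lt1, rt1, g1, r1, e1⟩ ⟨k2, pos2, par2, lt2, rt2, g2, r2, e2⟩ h
  simp only [encode] at h
  obtain ⟨hk, hrest⟩ := Sigma.mk.inj_iff.mp h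
  subst hk
  rw [heq_iff_eq] at hrest
  simp only [Prod.mk.injEq] at hrest
  obtain ⟨hp, hg, hr, he⟩ := hrest
  subst hp; subst hg; subst hr; subst he
  rfl

/-- For every `g ≥ 0`, `n ≥ 1` and `m ≥ 0`, the set
`SRT^{(b,c,a)}_{g,n,m;∘}` of isomorphism classes of admissible complete balanced stable
rooted trees of genus `g` with `n` regular legs, `m` frozen legs and arbitrarily many extra
legs, is finite. -/
theorem statement10 (g n m : ℕ) (hn : 1 ≤ n) :
    {q : Quot (@SRTree.Iso n m) | ∃ T : SRTree n m, Quot.mk _ T = q ∧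
        T.Stable ∧ T.TotalGenus g ∧ T.Balanced ∧ T.Complete ∧ T.Admissible}.Finite := by
  have hset : {q : Quot (@SRTree.Iso n m) | ∃ T : SRTree n m, Quot.mk _ T = q ∧
        T.Stable ∧ T.TotalGenus g ∧ T.Balanced ∧ T.Complete ∧ T.Admissible}
      = Quot.mk _ '' {T : SRTree n m |
        T.Stable ∧ T.TotalGenus g ∧ T.Balanced ∧ T.Complete ∧ T.Admissible} := by
    ext q
    simp only [Set.mem_setOf_eq, Set.mem_image]
    constructor
    · rintro ⟨T, h1, h2⟩; exact ⟨T, h2, h1⟩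
    · rintro ⟨T, h2, h1⟩; exact ⟨T, h1, h2⟩
  rw [hset]
  apply Set.Finite.image
  apply Set.Finite.of_finite_image (f := encode) ?_ encode_injective.injOn
  apply Set.Finite.subset (finite_encoded n ((g + 2 * n + 1) * n) g (2 * g + m))
  rintro _ ⟨T, hT, rfl⟩
  obtain ⟨hS, hG, hB, hC, hA⟩ := hT
  refine ⟨?_, ?_, ?_⟩
  · calc T.k ≤ T.deg * n := T.k_le hC
      _ ≤ (g + 2 * n + 1) * n := Nat.mul_le_mul_right _ (T.deg_le hC hG hn)
  · exact T.genus_le hG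
  · exact T.eleg_le hB hA hG
end
end
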